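/- arXiv:2002.06455 — 5 statements merged into one kernel-verified Lean document; each statement's English description precedes it below -/
import Mathlib

section
/- For every positive integer n and every real (or formal) variable s, the sum over multi-indices J with deg(J) = n of s^{|J|}/(prod_u J(u)! u^{J(u)}) equals prod_{k=1}^n ((1/k)·s + (k-1)/k), which also equals binomial(s + n - 1, n) = (1/n!)·prod_{k=1}^n (s + k - 1). -/
open Finset

/-- The finset of multi-indices `J = (J(1),...,J(n))` (encoded as functions `Fin n → ℕ`,
where the index `u : Fin n` represents the integer `u+1`) of degree
`deg J = ∑_{u=1}^n u * J(u) = n`. -/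
def MIdeg (n : ℕ) : Finset (Fin n → ℕ) :=
  (Fintype.piFinset fun _ => Finset.range (n + 1)).filter fun J => ∑ u, (u.1 + 1) * J u = n

def MI (N m : ℕ) : Finset (Fin N → ℕ) :=
  (Fintype.piFinset fun _ => Finset.range (N + 1)).filter fun J => ∑ u, (u.1 + 1) * J u = m

noncomputable def Fterm (N : ℕ) (s : ℝ) (J : Fin N → ℕ) : ℝ :=
  s ^ (∑ u, J u) / ∏ u : Fin N, ((Nat.factorial (J u)) * (u.1 + 1) ^ (J u) : ℝ)

noncomputable def S (N : ℕ) (s : ℝ) (m : ℕ) : ℝ := ∑ J ∈ MI N m, Fterm N s J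

lemma mem_MI {N m : ℕ} (hm : m ≤ N) (J : Fin N → ℕ) :
    J ∈ MI N m ↔ ∑ u, (u.1 + 1) * J u = m := by
  simp only [MI, mem_filter, Fintype.mem_piFinset, mem_range, and_iff_right_iff_imp]
  intro h u
  have : (u.1 + 1) * J u ≤ m := h ▸ Finset.single_le_sum (f := fun v : Fin N => (v.1+1) * J v) (fun i _ => Nat.zero_le _) (mem_univ u)
  have : J u ≤ m := le_trans (Nat.le_mul_of_pos_left _ (Nat.succ_pos _)) this
  omega

lemma S_zero (N : ℕ) (s : ℝ) : S N s 0 = 1 := by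
  have h : MI N 0 = {fun _ => 0} := by
    ext J
    simp only [mem_MI (Nat.zero_le N), mem_singleton, Finset.sum_eq_zero_iff, mem_univ,
      true_implies, funext_iff]
    constructor
    · intro h u; simpa using h u
    · intro h u; rw [h u]; ring
  simp [S, h, Fterm]

lemma sum_update_erase {M : Type*} [AddCommMonoid M] {N : ℕ} (u : Fin N) (J : Fin N → ℕ)
    (a : ℕ) (g : Fin N → ℕ → M) :
    ∑ v, g v (Function.update J u a v) = g u a + ∑ v ∈ Finset.univ.erase u, g v (J v) := by
  rw [← Finset.add_sum_erase _ (fun v => g v (Function.update J u a v)) (mem_univ u)]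
  congr 1
  · rw [Function.update_self]
  · exact Finset.sum_congr rfl fun v hv => by
      rw [Function.update_of_ne (Finset.ne_of_mem_erase hv)]

lemma sum_split {M : Type*} [AddCommMonoid M] {N : ℕ} (u : Fin N) (J : Fin N → ℕ)
    (g : Fin N → ℕ → M) :
    ∑ v, g v (J v) = g u (J u) + ∑ v ∈ Finset.univ.erase u, g v (J v) :=
  (Finset.add_sum_erase _ (fun v => g v (J v)) (mem_univ u)).symm

lemma prod_update_erase {M : Type*} [CommMonoid M] {N : ℕ} (u : Fin N) (J : Fin N → ℕ)
    (a : ℕ) (g : Fin N → ℕ → M) :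
    ∏ v, g v (Function.update J u a v) = g u a * ∏ v ∈ Finset.univ.erase u, g v (J v) := by
  rw [← Finset.mul_prod_erase _ (fun v => g v (Function.update J u a v)) (mem_univ u)]
  congr 1
  · rw [Function.update_self]
  · exact Finset.prod_congr rfl fun v hv => by
      rw [Function.update_of_ne (Finset.ne_of_mem_erase hv)]

lemma prod_split {M : Type*} [CommMonoid M] {N : ℕ} (u : Fin N) (J : Fin N → ℕ)
    (g : Fin N → ℕ → M) :
    ∏ v, g v (J v) = g u (J u) * ∏ v ∈ Finset.univ.erase u, g v (J v) :=
  (Finset.mul_prod_erase _ (fun v => g v (J v)) (mem_univ u)).symm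

lemma step (N : ℕ) (s : ℝ) (m : ℕ) (u : Fin N) (hm : m ≤ N) (hu : u.1 + 1 ≤ m) :
    ∑ J ∈ MI N m, ((u.1 + 1) * J u : ℝ) * Fterm N s J = s * S N s (m - (u.1 + 1)) := by
  classical
  rw [S, Finset.mul_sum, MI]
  rw [← Finset.sum_filter_of_ne (p := fun J => J u ≠ 0)
    (fun J _ hne => by intro h0; exact hne (by simp [h0]))]
  rw [Finset.filter_filter]
  have hmem : ∀ J : Fin N → ℕ,
      (J ∈ (Fintype.piFinset fun _ => Finset.range (N + 1)).filter
        fun J => (∑ v, (v.1 + 1) * J v = m) ∧ J u ≠ 0)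
      ↔ (∑ v, (v.1 + 1) * J v = m ∧ J u ≠ 0) := by
    intro J
    rw [Finset.mem_filter, and_iff_right_iff_imp]
    rintro ⟨hd, -⟩
    exact (Finset.mem_filter.1 ((mem_MI hm J).2 hd)).1
  refine Finset.sum_nbij' (i := fun J => Function.update J u (J u - 1))
    (j := fun J => Function.update J u (J u + 1)) ?_ ?_ ?_ ?_ ?_
  · intro J hJ
    rw [hmem] at hJ
    obtain ⟨hd, h0⟩ := hJ
    rw [mem_MI (by omega)]
    rw [sum_update_erase u J (J u - 1) (fun v a => (v.1 + 1) * a)]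
    rw [sum_split u J (fun v a => (v.1 + 1) * a)] at hd
    have h1 : 1 ≤ J u := Nat.one_le_iff_ne_zero.2 h0
    obtain ⟨k, hk⟩ : ∃ k, J u = k + 1 := ⟨J u - 1, (Nat.succ_pred_eq_of_ne_zero h0).symm⟩
    have h2 : (u.1 + 1) * (J u - 1) + (u.1 + 1) = (u.1 + 1) * J u := by
      rw [hk, Nat.add_sub_cancel]; ring
    omega
  · intro J hJ
    rw [mem_MI (by omega)] at hJ
    rw [hmem]
    constructor
    · rw [sum_update_erase u J (J u + 1) (fun v a => (v.1 + 1) * a)]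
      rw [sum_split u J (fun v a => (v.1 + 1) * a)] at hJ
      have : (u.1 + 1) * (J u + 1) = (u.1 + 1) * J u + (u.1 + 1) := by ring
      omega
    · simp [Function.update_self]
  · intro J hJ
    rw [hmem] at hJ
    obtain ⟨-, h0⟩ := hJ
    simp only [Function.update_self, Function.update_idem]
    rw [show J u - 1 + 1 = J u by omega, Function.update_eq_self]
  · intro J hJ
    simp only [Function.update_self, Function.update_idem, Nat.add_sub_cancel,
      Function.update_eq_self]
  · intro J hJ
    rw [hmem] at hJ
    obtain ⟨hd, h0⟩ := hJ
    obtain ⟨k, hk⟩ : ∃ k, J u = k + 1 := ⟨J u - 1, (Nat.succ_pred_eq_of_ne_zero h0).symm⟩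
    unfold Fterm
    rw [sum_update_erase u J (J u - 1) (fun _ a => a),
        sum_split u J (fun _ a => a),
        prod_update_erase u J (J u - 1) (fun v a => ((Nat.factorial a) * (v.1 + 1) ^ a : ℝ)),
        prod_split u J (fun v a => ((Nat.factorial a) * (v.1 + 1) ^ a : ℝ))]
    rw [hk]
    simp only [Nat.add_sub_cancel]
    set T := ∑ v ∈ Finset.univ.erase u, J v with hT
    set P := ∏ v ∈ Finset.univ.erase u, ((Nat.factorial (J v)) * (v.1 + 1) ^ (J v) : ℝ) with hP
    have hPpos : 0 < P := Finset.prod_pos fun v _ => by positivity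
    have hfac : ((Nat.factorial (k + 1) : ℝ)) = (k + 1) * (Nat.factorial k : ℝ) := by
      rw [Nat.factorial_succ]; push_cast; ring
    rw [hfac, pow_succ, pow_add, pow_succ]
    have h1 : (Nat.factorial k : ℝ) ≠ 0 := by positivity
    have h2 : ((u.1 : ℝ) + 1) ≠ 0 := by positivity
    have h3 : (k : ℝ) + 1 ≠ 0 := by positivity
    field_simp
    push_cast
    ring

lemma key (N : ℕ) (s : ℝ) (m : ℕ) (hm1 : 1 ≤ m) (hm : m ≤ N) :
    (m : ℝ) * S N s m = s * ∑ k ∈ Finset.range m, S N s k := by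
  classical
  have h1 : (m : ℝ) * S N s m
      = ∑ u : Fin N, ∑ J ∈ MI N m, ((u.1 + 1) * J u : ℝ) * Fterm N s J := by
    rw [S, Finset.mul_sum, ← Finset.sum_comm]
    refine Finset.sum_congr rfl fun J hJ => ?_
    rw [← Finset.sum_mul]
    congr 1
    have hd := (mem_MI hm J).1 hJ
    rw [← hd]
    push_cast
    ring
  rw [h1]
  have h2 : ∀ u : Fin N, ∑ J ∈ MI N m, ((u.1 + 1) * J u : ℝ) * Fterm N s J
      = if u.1 + 1 ≤ m then s * S N s (m - (u.1 + 1)) else 0 := by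
    intro u
    split_ifs with h
    · exact step N s m u hm h
    · refine Finset.sum_eq_zero fun J hJ => ?_
      have hd := (mem_MI hm J).1 hJ
      have hle : (u.1 + 1) * J u ≤ m := hd ▸ Finset.single_le_sum
        (f := fun v : Fin N => (v.1 + 1) * J v) (fun i _ => Nat.zero_le _) (mem_univ u)
      have h0 : J u = 0 := by
        by_contra h0
        have := Nat.le_mul_of_pos_right (u.1 + 1) (Nat.pos_of_ne_zero h0)
        omega
      simp [h0]
  calc ∑ u : Fin N, ∑ J ∈ MI N m, ((u.1 + 1) * J u : ℝ) * Fterm N s J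
      = ∑ u ∈ Finset.range N, (if u + 1 ≤ m then s * S N s (m - (u + 1)) else 0) := by
        rw [← Fin.sum_univ_eq_sum_range (fun u => if u + 1 ≤ m then s * S N s (m - (u + 1)) else 0) N]
        exact Finset.sum_congr rfl fun u _ => h2 u
    _ = ∑ u ∈ Finset.range m, (if u + 1 ≤ m then s * S N s (m - (u + 1)) else 0) :=
        (Finset.sum_subset (Finset.range_subset_range.2 hm) (fun x _ hx => by
          rw [Finset.mem_range] at hx; rw [if_neg]; omega)).symm
    _ = ∑ u ∈ Finset.range m, s * S N s (m - 1 - u) := Finset.sum_congr rfl fun u hu => by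
          rw [Finset.mem_range] at hu
          rw [if_pos (by omega), show m - (u + 1) = m - 1 - u by omega]
    _ = ∑ u ∈ Finset.range m, s * S N s u := Finset.sum_range_reflect (fun k => s * S N s k) m
    _ = s * ∑ k ∈ Finset.range m, S N s k := by rw [Finset.mul_sum]

noncomputable def B (s : ℝ) (m : ℕ) : ℝ :=
  (1 / (Nat.factorial m : ℝ)) * ∏ k ∈ Finset.range m, (s + k)

lemma B_rec (s : ℝ) (m : ℕ) (hm : 1 ≤ m) :
    (m : ℝ) * B s m = s * ∑ k ∈ Finset.range m, B s k := by
  induction m with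
  | zero => omega
  | succ m ih =>
    rcases Nat.eq_zero_or_pos m with h0 | h1
    · subst h0
      simp [B, Nat.factorial]
    · have hstep : ((m + 1 : ℕ) : ℝ) * B s (m + 1) = (s + m) * B s m := by
        unfold B
        rw [Finset.prod_range_succ, Nat.factorial_succ]
        have hf : (Nat.factorial m : ℝ) ≠ 0 := by positivity
        have hm1 : ((m : ℝ) + 1) ≠ 0 := by positivity
        push_cast
        field_simp
      push_cast at hstep ⊢
      rw [hstep, Finset.sum_range_succ]
      have ih' := ih h1
      linear_combination ih'

lemma S_eq_B (N : ℕ) (s : ℝ) : ∀ m, m ≤ N → S N s m = B s m := by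
  intro m
  induction m using Nat.strong_induction_on with
  | _ m ih =>
    intro hm
    rcases Nat.eq_zero_or_pos m with h0 | h1
    · subst h0
      rw [S_zero]
      simp [B]
    · have hk := key N s m h1 hm
      have hb := B_rec s m h1
      have hsum : ∑ k ∈ Finset.range m, S N s k = ∑ k ∈ Finset.range m, B s k :=
        Finset.sum_congr rfl fun k hk' => by
          rw [Finset.mem_range] at hk'
          exact ih k hk' (by omega)
      have hm0 : (m : ℝ) ≠ 0 := Nat.cast_ne_zero.2 (by omega)
      exact mul_left_cancel₀ hm0 (by rw [hk, hsum, ← hb])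

/-- `∑_{deg J = n} s^{|J|} / ∏_u J(u)! u^{J(u)} = ∏_{k=1}^n ((1/k) s + (k-1)/k)
    = (1/n!) ∏_{k=1}^n (s + k - 1)`. -/
theorem cycle_counting_generating_function (n : ℕ) (hn : 1 ≤ n) (s : ℝ) :
    (∑ J ∈ MIdeg n, s ^ (∑ u, J u) /
        ∏ u : Fin n, ((Nat.factorial (J u)) * (u.1 + 1) ^ (J u) : ℝ)
      = ∏ k ∈ Finset.range n, ((1 / (k + 1 : ℝ)) * s + (k : ℝ) / (k + 1))) ∧
    (∏ k ∈ Finset.range n, ((1 / (k + 1 : ℝ)) * s + (k : ℝ) / (k + 1))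
      = (1 / (Nat.factorial n : ℝ)) * ∏ k ∈ Finset.range n, (s + (k : ℝ))) := by
  have hprod : ∏ k ∈ Finset.range n, ((1 / (k + 1 : ℝ)) * s + (k : ℝ) / (k + 1))
      = (1 / (Nat.factorial n : ℝ)) * ∏ k ∈ Finset.range n, (s + (k : ℝ)) := by
    have h : ∀ k : ℕ, (1 / (k + 1 : ℝ)) * s + (k : ℝ) / (k + 1) = (s + k) / (k + 1) := by
      intro k
      have : ((k : ℝ) + 1) ≠ 0 := by positivity
      field_simp
    rw [Finset.prod_congr rfl fun k _ => h k, Finset.prod_div_distrib]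
    have : (∏ k ∈ Finset.range n, ((k : ℝ) + 1)) = (Nat.factorial n : ℝ) := by
      rw [← Finset.prod_range_add_one_eq_factorial]
      push_cast
      rfl
    rw [this]
    ring
  refine ⟨?_, hprod⟩
  have h1 : (∑ J ∈ MIdeg n, s ^ (∑ u, J u) /
      ∏ u : Fin n, ((Nat.factorial (J u)) * (u.1 + 1) ^ (J u) : ℝ)) = S n s n := rfl
  rw [h1, S_eq_B n s n le_rfl, hprod]
  rfl
end

section
/- On the symmetric group S_n with uniform probability measure, the random variables X_1, ..., X_n defined by X_k(σ) = 1 if σ(k) = k viewed inside S_k after applying the canonical projections (i.e., X_k(σ) = 1 iff the projection of σ to S_k fixes k), and X_k(σ) = 0 otherwise, are independent, with P(X_k = 1) = 1/k. -/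
open Finset
open scoped Classical

/-- One projection step `S_{m+1} → S_m`: delete the top letter (the letter `m+1`,
i.e. the element `Fin.last m`) from its cycle.  Concretely, transport `σ` to a
permutation of `Option (Fin m)` via `finSuccEquivLast` (which sends the last element
to `none`) and remove `none` from its cycle via `Equiv.removeNone`. -/
def projStep {m : ℕ} (σ : Equiv.Perm (Fin (m + 1))) : Equiv.Perm (Fin m) :=
  Equiv.removeNone (finSuccEquivLast.permCongr σ)

/-- The composed projection `S_{k+j} → S_k`, deleting the letters `k+j, ..., k+1`
one at a time. -/
def projTo (k : ℕ) : (j : ℕ) → Equiv.Perm (Fin (k + j)) → Equiv.Perm (Fin k)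
  | 0, σ => σ
  | j + 1, σ => projTo k j (projStep σ)

/-- For `σ ∈ S_n` (acting on `Fin n`, thought of as the letters `1, ..., n`),
`Xfun n k σ = 1` if the projection of `σ` to `S_k` fixes the letter `k`
(the top element of `Fin k`), and `0` otherwise (`0` also if `k ∉ {1,...,n}`). -/
def Xfun (n k : ℕ) (σ : Equiv.Perm (Fin n)) : ℕ :=
  if h : 1 ≤ k ∧ k ≤ n then
    if projTo k (n - k) ((finCongr (by omega : n = k + (n - k))).permCongr σ)
        ⟨k - 1, by omega⟩ = (⟨k - 1, by omega⟩ : Fin k) then 1 else 0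
  else 0

lemma permCongr_refl' {α : Type*} (σ : Equiv.Perm α) :
    (Equiv.refl α).permCongr σ = σ := by
  ext x; simp [Equiv.permCongr]

lemma projTo_congr {k j j' : ℕ} (h : j = j') (hh : k + j = k + j')
    (σ : Equiv.Perm (Fin (k + j))) :
    projTo k j' ((finCongr hh).permCongr σ) = projTo k j σ := by
  subst h
  rw [show finCongr hh = Equiv.refl (Fin (k+j)) from by ext x; simp, permCongr_refl']

lemma projTo_congr_succ {k j j' : ℕ} (h : j + 1 = j') (hh : k + j + 1 = k + j')
    (σ : Equiv.Perm (Fin (k + j + 1))) :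
    projTo k j' ((finCongr hh).permCongr σ) = projTo k j (projStep σ) := by
  subst h
  rw [show finCongr hh = Equiv.refl (Fin (k + j + 1)) from by ext x; simp]
  rfl

lemma Xfun_step {m k : ℕ} (hk1 : 1 ≤ k) (hk : k ≤ m) (σ : Equiv.Perm (Fin (m + 1))) :
    Xfun (m + 1) k σ = Xfun m k (projStep σ) := by
  obtain ⟨j, rfl⟩ : ∃ j, m = k + j := ⟨m - k, by omega⟩
  unfold Xfun
  rw [dif_pos ⟨hk1, by omega⟩, dif_pos ⟨hk1, by omega⟩]
  rw [projTo_congr_succ (show j + 1 = k + j + 1 - k by omega),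
      projTo_congr (show j = k + j - k by omega)]

lemma Xfun_top {m : ℕ} (σ : Equiv.Perm (Fin (m + 1))) :
    Xfun (m + 1) (m + 1) σ = if σ (Fin.last m) = Fin.last m then 1 else 0 := by
  unfold Xfun
  rw [dif_pos ⟨by omega, le_refl _⟩]
  rw [projTo_congr (show 0 = m + 1 - (m + 1) by omega)]
  have h1 : (⟨m + 1 - 1, by omega⟩ : Fin (m + 1)) = Fin.last m := by
    ext; simp
  rw [show projTo (m+1) 0 σ = σ from rfl, h1]



noncomputable def decompE (m : ℕ) :
    Equiv.Perm (Fin (m + 1)) ≃ Option (Fin m) × Equiv.Perm (Fin m) :=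
  (Equiv.permCongr finSuccEquivLast).trans Equiv.Perm.decomposeOption

lemma decompE_snd {m : ℕ} (σ : Equiv.Perm (Fin (m + 1))) :
    (decompE m σ).2 = projStep σ := rfl

lemma decompE_fst_eq_none {m : ℕ} (σ : Equiv.Perm (Fin (m + 1))) :
    (decompE m σ).1 = none ↔ σ (Fin.last m) = Fin.last m := by
  have h : (decompE m σ).1 = finSuccEquivLast (σ (Fin.last m)) := by
    simp [decompE, Equiv.permCongr, Equiv.Perm.decomposeOption]
  rw [h]
  constructor
  · intro hx
    have := finSuccEquivLast.injective (a₁ := σ (Fin.last m)) (a₂ := Fin.last m)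
    simp at this hx ⊢
    exact this (by simp [hx])
  · intro hx; simp [hx]

lemma card_filter_equiv {α β : Type*} [Fintype α] [Fintype β] (e : α ≃ β)
    (R : β → Prop) :
    (univ.filter fun a => R (e a)).card = (univ.filter R).card := by
  rw [← Fintype.card_subtype, ← Fintype.card_subtype]
  exact Fintype.card_congr (e.subtypeEquiv fun a => Iff.rfl)

lemma card_filter_prod {α β : Type*} [Fintype α] [Fintype β]
    (Q : α → Prop) (P : β → Prop) :
    (univ.filter fun p : α × β => Q p.1 ∧ P p.2).card
      = (univ.filter Q).card * (univ.filter P).card := by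
  rw [← Finset.univ_product_univ, Finset.filter_product, Finset.card_product]

lemma card_option_none (m : ℕ) :
    (univ.filter fun a : Option (Fin m) => a = none).card = 1 := by
  rw [Finset.card_eq_one]; exact ⟨none, by ext a; simp⟩

lemma card_option_some (m : ℕ) :
    (univ.filter fun a : Option (Fin m) => ¬ a = none).card = m := by
  rw [Finset.filter_not, Finset.card_sdiff_of_subset (Finset.filter_subset _ _)]
  simp [Finset.filter_eq', Fintype.card_option, card_option_none]

lemma Icc_succ_right' (m : ℕ) : Icc 1 (m + 1) = insert (m + 1) (Icc 1 m) := by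
  ext x; simp [Finset.mem_Icc]; omega

lemma card_congr_subtype_equiv {α β : Type*} (e : α ≃ β)
    (R : β → Prop) :
    Nat.card {a : α // R (e a)} = Nat.card {b : β // R b} :=
  Nat.card_congr (e.subtypeEquiv fun _ => Iff.rfl)

lemma main_count : ∀ (n : ℕ) (S : Finset ℕ), (∀ k ∈ S, 1 ≤ k ∧ k ≤ n) → ∀ v : ℕ → ℕ,
    Nat.card {σ : Equiv.Perm (Fin n) // ∀ k ∈ S, Xfun n k σ = v k}
      = ∏ k ∈ Icc 1 n,
          (if k ∈ S then (if v k = 1 then 1 else if v k = 0 then k - 1 else 0) else k) := by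
  intro n
  induction n with
  | zero =>
    intro S hS v
    have hS0 : S = ∅ := Finset.eq_empty_of_forall_notMem fun k hk => by
      have := hS k hk; omega
    subst hS0
    rw [Nat.card_congr (Equiv.subtypeUnivEquiv fun σ k hk => by simp at hk)]
    simp [Nat.card_eq_fintype_card]
  | succ m IH =>
    intro S hS v
    rw [Icc_succ_right', Finset.prod_insert (by simp)]
    by_cases hmem : m + 1 ∈ S
    · -- top letter is constrained
      have hpred : ∀ σ : Equiv.Perm (Fin (m + 1)),
          (∀ k ∈ S, Xfun (m + 1) k σ = v k) ↔
            (((if (decompE m σ).1 = none then 1 else 0) = v (m + 1)) ∧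
              ∀ k ∈ S.erase (m + 1), Xfun m k (decompE m σ).2 = v k) := by
        intro σ
        rw [decompE_snd]
        constructor
        · intro h
          refine ⟨?_, ?_⟩
          · have h1 := h (m + 1) hmem
            rw [Xfun_top] at h1
            rw [if_congr (decompE_fst_eq_none σ) rfl rfl]
            exact h1
          · intro k hk
            have hk2 := hS k (Finset.mem_of_mem_erase hk)
            have hkne := Finset.ne_of_mem_erase hk
            rw [← Xfun_step hk2.1 (by omega)]
            exact h k (Finset.mem_of_mem_erase hk)
        · rintro ⟨h1, h2⟩ k hk
          by_cases hke : k = m + 1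
          · subst hke
            rw [Xfun_top, ← if_congr (decompE_fst_eq_none σ) rfl rfl]
            exact h1
          · have hk2 := hS k hk
            rw [Xfun_step hk2.1 (by omega)]
            exact h2 k (Finset.mem_erase.mpr ⟨hke, hk⟩)
      have hQcard : Nat.card {a : Option (Fin m) //
            (if a = none then 1 else 0) = v (m + 1)}
          = (if v (m + 1) = 1 then 1 else if v (m + 1) = 0 then m + 1 - 1 else 0) := by
        by_cases hv1 : v (m + 1) = 1
        · rw [if_pos hv1]
          rw [Nat.card_congr (Equiv.subtypeEquivRight (q := fun a => a = none)
            (fun a => by by_cases h : a = none <;> simp [h, hv1]))]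
          rw [Nat.card_eq_fintype_card]
          exact Fintype.card_subtype_eq none
        · rw [if_neg hv1]
          by_cases hv0 : v (m + 1) = 0
          · rw [if_pos hv0]
            rw [Nat.card_congr (Equiv.subtypeEquivRight (q := fun a => ¬ a = none)
              (fun a => by by_cases h : a = none <;> simp [h, hv0, hv1]))]
            rw [Nat.card_eq_fintype_card, Fintype.card_subtype_compl, Fintype.card_subtype_eq none,
              Fintype.card_option, Fintype.card_fin]
          · rw [if_neg hv0]
            rw [Nat.card_eq_fintype_card, Fintype.card_eq_zero_iff]
            refine ⟨fun x => absurd x.2 ?_⟩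
            by_cases h : x.1 = none <;> simp [h] <;> omega
      have hPcard := IH (S.erase (m + 1)) (fun k hk => by
          have h1 := hS k (Finset.mem_of_mem_erase hk)
          have h2 := Finset.ne_of_mem_erase hk
          omega) v
      calc Nat.card {σ : Equiv.Perm (Fin (m + 1)) // ∀ k ∈ S, Xfun (m + 1) k σ = v k}
          = Nat.card {σ : Equiv.Perm (Fin (m + 1)) //
              ((if (decompE m σ).1 = none then 1 else 0) = v (m + 1)) ∧
                ∀ k ∈ S.erase (m + 1), Xfun m k (decompE m σ).2 = v k} :=
            Nat.card_congr (Equiv.subtypeEquivRight hpred)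
        _ = Nat.card {p : Option (Fin m) × Equiv.Perm (Fin m) //
              ((if p.1 = none then 1 else 0) = v (m + 1)) ∧
                ∀ k ∈ S.erase (m + 1), Xfun m k p.2 = v k} :=
            card_congr_subtype_equiv (decompE m)
              (fun p => ((if p.1 = none then 1 else 0) = v (m + 1)) ∧
                ∀ k ∈ S.erase (m + 1), Xfun m k p.2 = v k)
        _ = Nat.card ({a : Option (Fin m) // (if a = none then 1 else 0) = v (m + 1)} ×
              {ρ : Equiv.Perm (Fin m) // ∀ k ∈ S.erase (m + 1), Xfun m k ρ = v k}) :=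
            Nat.card_congr (Equiv.subtypeProdEquivProd
              (p := fun a : Option (Fin m) => (if a = none then 1 else 0) = v (m + 1))
              (q := fun ρ : Equiv.Perm (Fin m) => ∀ k ∈ S.erase (m + 1), Xfun m k ρ = v k))
        _ = _ := by
            rw [Nat.card_prod, hQcard, hPcard, if_pos hmem]
            congr 1
            apply Finset.prod_congr rfl
            intro k hk
            rw [Finset.mem_Icc] at hk
            have hiff : k ∈ S.erase (m + 1) ↔ k ∈ S := by
              rw [Finset.mem_erase]
              exact ⟨fun h => h.2, fun h => ⟨by omega, h⟩⟩
            by_cases h : k ∈ S <;> simp [hiff, h]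
    · -- top letter is free
      have hpred : ∀ σ : Equiv.Perm (Fin (m + 1)),
          (∀ k ∈ S, Xfun (m + 1) k σ = v k) ↔
            ((fun _ : Option (Fin m) => True) (decompE m σ).1 ∧
              ∀ k ∈ S, Xfun m k (decompE m σ).2 = v k) := by
        intro σ
        rw [decompE_snd]
        refine ⟨fun h => ⟨trivial, fun k hk => ?_⟩, fun h k hk => ?_⟩
        · have hk2 := hS k hk
          have hkne : k ≠ m + 1 := fun h' => hmem (h' ▸ hk)
          rw [← Xfun_step hk2.1 (by omega)]
          exact h k hk
        · have hk2 := hS k hk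
          have hkne : k ≠ m + 1 := fun h' => hmem (h' ▸ hk)
          rw [Xfun_step hk2.1 (by omega)]
          exact h.2 k hk
      have hPcard := IH S (fun k hk => by
          have h1 := hS k hk
          have hkne : k ≠ m + 1 := fun h' => hmem (h' ▸ hk)
          omega) v
      calc Nat.card {σ : Equiv.Perm (Fin (m + 1)) // ∀ k ∈ S, Xfun (m + 1) k σ = v k}
          = Nat.card {σ : Equiv.Perm (Fin (m + 1)) //
              (fun _ : Option (Fin m) => True) (decompE m σ).1 ∧
                ∀ k ∈ S, Xfun m k (decompE m σ).2 = v k} :=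
            Nat.card_congr (Equiv.subtypeEquivRight hpred)
        _ = Nat.card {p : Option (Fin m) × Equiv.Perm (Fin m) //
              (fun _ : Option (Fin m) => True) p.1 ∧ ∀ k ∈ S, Xfun m k p.2 = v k} :=
            card_congr_subtype_equiv (decompE m)
              (fun p => (fun _ : Option (Fin m) => True) p.1 ∧ ∀ k ∈ S, Xfun m k p.2 = v k)
        _ = Nat.card ({a : Option (Fin m) // (fun _ : Option (Fin m) => True) a} ×
              {ρ : Equiv.Perm (Fin m) // ∀ k ∈ S, Xfun m k ρ = v k}) :=
            Nat.card_congr (Equiv.subtypeProdEquivProd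
              (p := fun _ : Option (Fin m) => True)
              (q := fun ρ : Equiv.Perm (Fin m) => ∀ k ∈ S, Xfun m k ρ = v k))
        _ = _ := by
            rw [Nat.card_prod, hPcard, if_neg hmem]
            congr 1
            have h2 : Nat.card {a : Option (Fin m) // (fun _ : Option (Fin m) => True) a}
                = Nat.card (Option (Fin m)) :=
              Nat.card_congr (Equiv.subtypeUnivEquiv fun _ => trivial)
            rw [h2, Nat.card_eq_fintype_card, Fintype.card_option, Fintype.card_fin]

lemma filter_card_eq_nat_card {α : Type*} [Fintype α] (p : α → Prop) [DecidablePred p] :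
    (univ.filter p).card = Nat.card {x // p x} := by
  rw [Nat.card_eq_fintype_card, Fintype.card_subtype]


/-- On `S_n` with the uniform probability measure, the random variables
`X_1, ..., X_n` (indicators that the projection of `σ` to `S_k` fixes the letter `k`)
are independent, with `P(X_k = 1) = 1/k`. -/
theorem Xfun_independent_bernoulli (n : ℕ) (hn : 1 ≤ n) :
    (∀ S : Finset ℕ, (∀ k ∈ S, 1 ≤ k ∧ k ≤ n) → ∀ v : ℕ → ℕ,
      ((Finset.univ.filter fun σ : Equiv.Perm (Fin n) => ∀ k ∈ S, Xfun n k σ = v k).card : ℚ) /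
          (Fintype.card (Equiv.Perm (Fin n)))
        = ∏ k ∈ S,
            ((Finset.univ.filter fun σ : Equiv.Perm (Fin n) => Xfun n k σ = v k).card : ℚ) /
              (Fintype.card (Equiv.Perm (Fin n)))) ∧
    (∀ k : ℕ, 1 ≤ k → k ≤ n →
      ((Finset.univ.filter fun σ : Equiv.Perm (Fin n) => Xfun n k σ = 1).card : ℚ) /
          (Fintype.card (Equiv.Perm (Fin n)))
        = 1 / k) := by
  -- total count
  have htot : (Fintype.card (Equiv.Perm (Fin n)) : ℕ) = ∏ k ∈ Icc 1 n, k := by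
    have h := main_count n ∅ (by simp) (fun _ => 0)
    rw [Nat.card_congr (Equiv.subtypeUnivEquiv fun σ => by simp),
      Nat.card_eq_fintype_card] at h
    simpa using h
  have hcount : ∀ S : Finset ℕ, (∀ k ∈ S, 1 ≤ k ∧ k ≤ n) → ∀ v : ℕ → ℕ,
      ((univ.filter fun σ : Equiv.Perm (Fin n) => ∀ k ∈ S, Xfun n k σ = v k).card : ℕ)
        = ∏ k ∈ Icc 1 n,
            (if k ∈ S then (if v k = 1 then 1 else if v k = 0 then k - 1 else 0) else k) :=
    fun S hS v => (filter_card_eq_nat_card _).trans (main_count n S hS v)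
  -- the key rational identity
  have key : ∀ S : Finset ℕ, (∀ k ∈ S, 1 ≤ k ∧ k ≤ n) → ∀ v : ℕ → ℕ,
      ((univ.filter fun σ : Equiv.Perm (Fin n) => ∀ k ∈ S, Xfun n k σ = v k).card : ℚ) /
          (Fintype.card (Equiv.Perm (Fin n)))
        = ∏ k ∈ S,
            (((if v k = 1 then 1 else if v k = 0 then k - 1 else 0 : ℕ) : ℚ) / k) := by
    intro S hS v
    have hsub : S ⊆ Icc 1 n := fun k hk => Finset.mem_Icc.mpr (hS k hk)
    rw [hcount S hS v, htot, Nat.cast_prod, Nat.cast_prod, ← Finset.prod_div_distrib]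
    have h1 : ∏ x ∈ Icc 1 n,
          (((if x ∈ S then (if v x = 1 then 1 else if v x = 0 then x - 1 else 0) else x : ℕ) : ℚ)
            / (x : ℚ))
        = ∏ x ∈ Icc 1 n,
            (if x ∈ S then (((if v x = 1 then 1 else if v x = 0 then x - 1 else 0 : ℕ)) : ℚ) / x
              else 1) := by
      apply Finset.prod_congr rfl
      intro x hx
      have hx1 := (Finset.mem_Icc.mp hx).1
      by_cases hxS : x ∈ S
      · rw [if_pos hxS, if_pos hxS]
      · rw [if_neg hxS, if_neg hxS, div_self (Nat.cast_ne_zero.mpr (by omega))]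
    rw [h1, ← Finset.prod_subset hsub (fun x _ hnx => if_neg hnx)]
    exact Finset.prod_congr rfl fun k hk => if_pos hk
  have hsingle : ∀ k : ℕ, 1 ≤ k → k ≤ n → ∀ v : ℕ → ℕ,
      ((univ.filter fun σ : Equiv.Perm (Fin n) => Xfun n k σ = v k).card : ℚ) /
          (Fintype.card (Equiv.Perm (Fin n)))
        = ((if v k = 1 then 1 else if v k = 0 then k - 1 else 0 : ℕ) : ℚ) / k := by
    intro k hk1 hkn v
    have hfe : (univ.filter fun σ : Equiv.Perm (Fin n) => Xfun n k σ = v k)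
        = (univ.filter fun σ : Equiv.Perm (Fin n) => ∀ j ∈ ({k} : Finset ℕ), Xfun n j σ = v j) := by
      ext σ; simp
    rw [hfe, key {k} (by intro j hj; simp at hj; omega) v, Finset.prod_singleton]
  constructor
  · intro S hS v
    rw [key S hS v]
    exact Finset.prod_congr rfl fun k hk => (hsingle k (hS k hk).1 (hS k hk).2 v).symm
  · intro k hk1 hkn
    exact (hsingle k hk1 hkn (fun _ => 1)).trans (by norm_num)
end

section
/- Fix N ≥ 1, and for j = 1, ..., N-1 set x_j = y_j + α_N·conj(y_{N-j}), x_N = α_N, where y_1, ..., y_{N-1} are complex functions of α_1, ..., α_{N-1} (independent of α_N), with convention y_0 = 1. Then as differential forms, dx_1 ∧ dx̄_1 ∧ ... ∧ dx_N ∧ dx̄_N = (1 - |α_N|²)^{N-1} · dy_1 ∧ dȳ_1 ∧ ... ∧ dy_{N-1} ∧ dȳ_{N-1} ∧ dα_N ∧ dᾱ_N. -/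
open LinearMap Complex

noncomputable section

lemma my_det_prodMap {M₁ M₂ : Type*} [AddCommGroup M₁] [AddCommGroup M₂]
    [Module ℝ M₁] [Module ℝ M₂] [FiniteDimensional ℝ M₁] [FiniteDimensional ℝ M₂]
    (f : M₁ →ₗ[ℝ] M₁) (g : M₂ →ₗ[ℝ] M₂) :
    LinearMap.det (f.prodMap g) = LinearMap.det f * LinearMap.det g := by
  classical
  let b₁ := Module.finBasis ℝ M₁
  let b₂ := Module.finBasis ℝ M₂
  rw [← LinearMap.det_toMatrix (b₁.prod b₂), LinearMap.toMatrix_prodMap,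
    Matrix.det_fromBlocks_zero₁₂, LinearMap.det_toMatrix, LinearMap.det_toMatrix]

def piSuccEquiv (n : ℕ) : (Fin (n + 1) → ℂ) ≃ₗ[ℝ] ℂ × (Fin n → ℂ) :=
  { (Fin.consEquiv (fun _ : Fin (n+1) => ℂ)).symm with
    map_add' := fun _ _ => rfl
    map_smul' := fun _ _ => rfl }

lemma det_compLeft (f : ℂ →ₗ[ℝ] ℂ) (m : ℕ) :
    LinearMap.det (LinearMap.compLeft f (Fin m)) = LinearMap.det f ^ m := by
  induction m with
  | zero =>
    have h : LinearMap.compLeft f (Fin 0) = LinearMap.id := by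
      refine LinearMap.ext fun v => funext fun i => i.elim0
    rw [h, LinearMap.det_id, pow_zero]
  | succ n ih =>
    have key : (piSuccEquiv n : (Fin (n+1) → ℂ) →ₗ[ℝ] ℂ × (Fin n → ℂ)) ∘ₗ
        (LinearMap.compLeft f (Fin (n+1))) ∘ₗ ((piSuccEquiv n).symm : (ℂ × (Fin n → ℂ)) →ₗ[ℝ] (Fin (n+1) → ℂ))
        = f.prodMap (LinearMap.compLeft f (Fin n)) := by
      refine LinearMap.ext fun p => ?_
      obtain ⟨z, v⟩ := p
      refine Prod.ext ?_ (funext fun i => ?_) <;>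
        simp [piSuccEquiv, LinearMap.compLeft_apply, Fin.consEquiv, Fin.tail, Fin.cons_succ]
    calc LinearMap.det (LinearMap.compLeft f (Fin (n+1)))
        = LinearMap.det ((piSuccEquiv n : (Fin (n+1) → ℂ) →ₗ[ℝ] ℂ × (Fin n → ℂ)) ∘ₗ
            (LinearMap.compLeft f (Fin (n+1))) ∘ₗ ((piSuccEquiv n).symm : (ℂ × (Fin n → ℂ)) →ₗ[ℝ] (Fin (n+1) → ℂ))) :=
          (LinearMap.det_conj _ (piSuccEquiv n)).symm
      _ = LinearMap.det f * LinearMap.det f ^ n := by rw [key, my_det_prodMap, ih]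
      _ = LinearMap.det f ^ (n + 1) := by ring

/-- `v ↦ (k ↦ v k + c * conj (v (rev k)))` -/
def Amap (m : ℕ) (c : ℂ) : (Fin m → ℂ) →ₗ[ℝ] (Fin m → ℂ) where
  toFun v := fun k => v k + c * (starRingEnd ℂ) (v k.rev)
  map_add' v w := by funext k; simp [map_add]; ring
  map_smul' r v := by funext k; simp [Complex.real_smul]; ring

/-- the intertwiner `P` with `P² = 4` -/
def Pmap (m : ℕ) : (Fin m → ℂ) →ₗ[ℝ] (Fin m → ℂ) where
  toFun v := fun k => v k + I * (starRingEnd ℂ) (v k) + v k.rev - I * (starRingEnd ℂ) (v k.rev)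
  map_add' v w := by funext k; simp [map_add]; ring
  map_smul' r v := by funext k; simp [Complex.real_smul]; ring

lemma Pmap_Pmap (m : ℕ) (v : Fin m → ℂ) : Pmap m (Pmap m v) = (4 : ℝ) • v := by
  funext k
  simp [Pmap, map_add, map_sub, map_mul, Complex.conj_conj, Complex.conj_I, Fin.rev_rev,
    Complex.real_smul]
  ring_nf
  simp [Complex.I_sq]
  ring

def PmapEquiv (m : ℕ) : (Fin m → ℂ) ≃ₗ[ℝ] (Fin m → ℂ) :=
  LinearEquiv.ofLinear (Pmap m) ((4 : ℝ)⁻¹ • Pmap m)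
    (by ext v; simp [Pmap_Pmap, smul_smul])
    (by ext v; simp [map_smul, Pmap_Pmap, smul_smul])

def conjShift (t : ℝ) : ℂ →ₗ[ℝ] ℂ where
  toFun z := z + t * (starRingEnd ℂ) z
  map_add' z w := by simp [map_add]; ring
  map_smul' r z := by simp [Complex.real_smul]; ring

lemma det_conjShift (t : ℝ) : LinearMap.det (conjShift t) = 1 - t ^ 2 := by
  rw [← LinearMap.det_toMatrix Complex.basisOneI]
  rw [Matrix.det_fin_two]
  simp [LinearMap.toMatrix_apply, conjShift, Complex.basisOneI]
  ring

lemma intertwine (m : ℕ) (t : ℝ) :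
    (Pmap m) ∘ₗ (Amap m (t : ℂ)) = (LinearMap.compLeft (conjShift t) (Fin m)) ∘ₗ (Pmap m) := by
  refine LinearMap.ext fun v => funext fun k => ?_
  simp [Pmap, Amap, conjShift, LinearMap.compLeft, map_add, map_sub, map_mul,
    Complex.conj_conj, Complex.conj_I, Complex.conj_ofReal, Fin.rev_rev]
  ring

lemma det_Amap_real (m : ℕ) (t : ℝ) :
    LinearMap.det (Amap m (t : ℂ)) = (1 - t ^ 2) ^ m := by
  have h : Amap m (t : ℂ) =
      ((PmapEquiv m).symm : (Fin m → ℂ) →ₗ[ℝ] (Fin m → ℂ)) ∘ₗ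
        (LinearMap.compLeft (conjShift t) (Fin m)) ∘ₗ
        (((PmapEquiv m).symm.symm) : (Fin m → ℂ) →ₗ[ℝ] (Fin m → ℂ)) := by
    have h2 := intertwine m t
    refine LinearMap.ext fun v => ?_
    have h3 : (Pmap m) ((Amap m (t:ℂ)) v) = (LinearMap.compLeft (conjShift t) (Fin m)) ((Pmap m) v) :=
      LinearMap.congr_fun h2 v
    have h4 : ∀ w, ((PmapEquiv m).symm.symm : (Fin m → ℂ) →ₗ[ℝ] _) w = Pmap m w := fun w => rfl
    simp only [LinearMap.comp_apply, h4]
    rw [← h3]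
    exact ((PmapEquiv m).symm_apply_apply _).symm
  rw [h, LinearMap.det_conj, det_compLeft, det_conjShift]

lemma det_Amap (m : ℕ) (c : ℂ) :
    LinearMap.det (Amap m c) = (1 - ‖c‖ ^ 2) ^ m := by
  rcases eq_or_ne c 0 with rfl | hc
  · simpa using det_Amap_real m 0
  · obtain ⟨μ, hμ⟩ : ∃ μ : ℂ, μ ^ 2 = c := ⟨Complex.exp (Complex.log c / 2), by
      rw [sq, ← Complex.exp_add, add_halves, Complex.exp_log hc]⟩
    have hμ0 : μ ≠ 0 := by rintro rfl; simp at hμ; exact hc hμ.symm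
    set t : ℝ := ‖c‖ with ht
    -- scalar equivalence
    let E : (Fin m → ℂ) ≃ₗ[ℝ] (Fin m → ℂ) :=
      LinearEquiv.ofLinear (μ • LinearMap.id) (μ⁻¹ • LinearMap.id)
        (by ext v; simp [smul_smul, ← mul_assoc, mul_inv_cancel₀ hμ0])
        (by ext v; simp [smul_smul, ← mul_assoc, inv_mul_cancel₀ hμ0])
    have key : (E : (Fin m → ℂ) →ₗ[ℝ] _) ∘ₗ (Amap m (t : ℂ)) ∘ₗ (E.symm : (Fin m → ℂ) →ₗ[ℝ] _)
        = Amap m c := by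
      refine LinearMap.ext fun v => funext fun k => ?_
      have habs : (t : ℂ) = μ * (starRingEnd ℂ) μ := by
        rw [Complex.mul_conj, ht, ← hμ]
        norm_cast
        rw [norm_pow, Complex.sq_norm]
      have hcμ : (starRingEnd ℂ) μ ≠ 0 := by simpa using hμ0
      simp [E, Amap, Pi.smul_apply, smul_eq_mul, map_mul, map_inv₀, habs, ← hμ]
      field_simp
    rw [← key, LinearMap.det_conj, det_Amap_real]

def shear (m : ℕ) (c : Fin m → ℂ) : ((Fin m → ℂ) × ℂ) →ₗ[ℝ] ((Fin m → ℂ) × ℂ) where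
  toFun p := (p.1 + fun k => p.2 * c k, p.2)
  map_add' p q := by
    refine Prod.ext (funext fun k => ?_) rfl
    simp; ring
  map_smul' r p := by
    refine Prod.ext (funext fun k => ?_) rfl
    simp [Complex.real_smul]; ring

lemma shear_comp (m : ℕ) (c d : Fin m → ℂ) :
    (shear m c) ∘ₗ (shear m d) = shear m (c + d) := by
  refine LinearMap.ext fun p => Prod.ext (funext fun k => ?_) rfl
  simp [shear]; ring

lemma shear_zero (m : ℕ) : shear m 0 = LinearMap.id := by
  refine LinearMap.ext fun p => Prod.ext (funext fun k => ?_) rfl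
  simp [shear]

lemma det_shear (m : ℕ) (c : Fin m → ℂ) : LinearMap.det (shear m c) = 1 := by
  -- conjugation by (v, b) ↦ (v, -b) sends shear c to shear (-c)
  let R : ((Fin m → ℂ) × ℂ) ≃ₗ[ℝ] ((Fin m → ℂ) × ℂ) :=
    (LinearEquiv.refl ℝ (Fin m → ℂ)).prodCongr (LinearEquiv.neg ℝ)
  have hconj : (R : _ →ₗ[ℝ] _) ∘ₗ (shear m c) ∘ₗ (R.symm : _ →ₗ[ℝ] _) = shear m (-c) := by
    refine LinearMap.ext fun p => Prod.ext (funext fun k => ?_) ?_ <;>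
      simp [R, shear, LinearEquiv.prodCongr_apply, LinearEquiv.prodCongr_symm, LinearEquiv.neg_apply,
        LinearEquiv.refl_apply]
  have h2 : LinearMap.det (shear m (-c)) = LinearMap.det (shear m c) := by
    rw [← hconj, LinearMap.det_conj]
  have h1 : LinearMap.det (shear m c) * LinearMap.det (shear m c) = 1 := by
    nth_rewrite 1 [← h2]
    rw [← LinearMap.det_comp, shear_comp, neg_add_cancel, shear_zero, LinearMap.det_id]
  have h3 : LinearMap.det (shear m c) =
      LinearMap.det (shear m ((2⁻¹ : ℝ) • c)) * LinearMap.det (shear m ((2⁻¹ : ℝ) • c)) := by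
    rw [← LinearMap.det_comp, shear_comp]
    congr 2
    funext k; simp [Complex.real_smul]; ring
  nlinarith [h1, h3, sq_nonneg (LinearMap.det (shear m ((2⁻¹ : ℝ) • c)))]

def phiD (M : ℕ) (y : Fin M → ℂ) (a : ℂ) (k : Fin (M + 1)) :
    ((Fin M → ℂ) × ℂ) →L[ℝ] ℂ :=
  if h : k.1 < M then
    (ContinuousLinearMap.proj (R := ℝ) (φ := fun _ : Fin M => ℂ) ⟨k.1, h⟩).comp
        (ContinuousLinearMap.fst ℝ (Fin M → ℂ) ℂ)
      + (a • ((Complex.conjCLE.toContinuousLinearMap).comp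
          ((ContinuousLinearMap.proj (R := ℝ) (φ := fun _ : Fin M => ℂ) ⟨M - k.1 - 1, by omega⟩).comp
            (ContinuousLinearMap.fst ℝ (Fin M → ℂ) ℂ)))
        + ((starRingEnd ℂ) (y ⟨M - k.1 - 1, by omega⟩)) • (ContinuousLinearMap.snd ℝ (Fin M → ℂ) ℂ))
  else ContinuousLinearMap.snd ℝ (Fin M → ℂ) ℂ

lemma decompose (M : ℕ) (y : Fin M → ℂ) (a : ℂ) :
    (LinearMap.prod (LinearMap.funLeft ℝ ℂ (Fin.castSucc : Fin M → Fin (M + 1)))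
        (LinearMap.proj (Fin.last M))) ∘ₗ
      (ContinuousLinearMap.pi (phiD M y a)).toLinearMap
    = (shear M (fun k => (starRingEnd ℂ) (y k.rev))) ∘ₗ
        ((Amap M a).prodMap (LinearMap.id : ℂ →ₗ[ℝ] ℂ)) := by
  refine LinearMap.ext fun p => Prod.ext (funext fun k => ?_) ?_
  · have hk : (Fin.castSucc k).1 < M := by simp
    have e1 : (⟨(Fin.castSucc k).1, by simpa using k.isLt⟩ : Fin M) = k := by
      refine Fin.ext ?_; simp
    have e2 : (⟨M - (Fin.castSucc k).1 - 1, by have := k.isLt; omega⟩ : Fin M) = k.rev := by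
      refine Fin.ext ?_; simp [Fin.val_rev]; omega
    simp only [LinearMap.comp_apply, ContinuousLinearMap.coe_coe, LinearMap.prod_apply,
      Function.prod, LinearMap.funLeft_apply, Function.comp, ContinuousLinearMap.pi_apply,
      phiD, dif_pos hk, e1, e2, shear, LinearMap.prodMap_apply, Amap]
    simp [shear, Amap, LinearMap.prodMap_apply]
    ring
  · have hk : ¬ ((Fin.last M).1 < M) := by simp
    simp only [LinearMap.comp_apply, ContinuousLinearMap.coe_coe, LinearMap.prod_apply,
      Function.prod, LinearMap.proj_apply, ContinuousLinearMap.pi_apply, phiD, dif_neg hk,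
      shear, LinearMap.prodMap_apply]
    rfl

/-- The inductive step of the volume formula, with `N = M + 1`.  The map
`S : (y_1, ..., y_M, α_N) ↦ (x_1, ..., x_N)` is given by `x_j = y_j + α_N conj(y_{N-j})`
for `1 ≤ j ≤ M` and `x_N = α_N`.  The statement
`dx_1 ∧ dx̄_1 ∧ ⋯ ∧ dx_N ∧ dx̄_N = (1-|α_N|²)^{N-1} dy_1 ∧ dȳ_1 ∧ ⋯ ∧ dα_N ∧ dᾱ_N`
is expressed by saying that the real-linear derivative of `S` (composed with the canonical
regrouping `(x_1,...,x_N) ↦ ((x_1,...,x_M), x_N)` of coordinates) has determinant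
`(1 - |α_N|²)^M`. -/
theorem verblunsky_jacobian_inductive_step (M : ℕ) (y : Fin M → ℂ) (a : ℂ) :
    LinearMap.det
        ((LinearMap.prod (LinearMap.funLeft ℝ ℂ (Fin.castSucc : Fin M → Fin (M + 1)))
            (LinearMap.proj (Fin.last M))) ∘ₗ
          (fderiv ℝ
            (fun w : (Fin M → ℂ) × ℂ => fun k : Fin (M + 1) =>
              if h : k.1 + 1 < M + 1 then
                w.1 ⟨k.1, by omega⟩ + w.2 * (starRingEnd ℂ) (w.1 ⟨M - k.1 - 1, by omega⟩)
              else w.2)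
            (y, a)).toLinearMap)
      = (1 - ‖a‖ ^ 2) ^ M := by
  have hS : HasFDerivAt
      (fun w : (Fin M → ℂ) × ℂ => fun k : Fin (M + 1) =>
        if h : k.1 + 1 < M + 1 then
          w.1 ⟨k.1, by omega⟩ + w.2 * (starRingEnd ℂ) (w.1 ⟨M - k.1 - 1, by omega⟩)
        else w.2)
      (ContinuousLinearMap.pi (phiD M y a)) (y, a) := by
    rw [hasFDerivAt_pi]
    intro k
    by_cases h : k.1 + 1 < M + 1
    · simp only [dif_pos h, dif_pos (show k.1 < M by omega), phiD]
      have h1 : HasFDerivAt (fun w : (Fin M → ℂ) × ℂ => w.1 ⟨k.1, by omega⟩)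
          ((ContinuousLinearMap.proj (R := ℝ) (φ := fun _ : Fin M => ℂ) ⟨k.1, by omega⟩).comp
            (ContinuousLinearMap.fst ℝ (Fin M → ℂ) ℂ)) (y, a) :=
        ((ContinuousLinearMap.proj (R := ℝ) (φ := fun _ : Fin M => ℂ) ⟨k.1, by omega⟩).comp
            (ContinuousLinearMap.fst ℝ (Fin M → ℂ) ℂ)).hasFDerivAt
      have h2 : HasFDerivAt (fun w : (Fin M → ℂ) × ℂ => w.2)
          (ContinuousLinearMap.snd ℝ (Fin M → ℂ) ℂ) (y, a) :=
        (ContinuousLinearMap.snd ℝ (Fin M → ℂ) ℂ).hasFDerivAt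
      have h3 : HasFDerivAt (fun w : (Fin M → ℂ) × ℂ => (starRingEnd ℂ) (w.1 ⟨M - k.1 - 1, by omega⟩))
          ((Complex.conjCLE.toContinuousLinearMap).comp
            ((ContinuousLinearMap.proj (R := ℝ) (φ := fun _ : Fin M => ℂ) ⟨M - k.1 - 1, by omega⟩).comp
              (ContinuousLinearMap.fst ℝ (Fin M → ℂ) ℂ))) (y, a) :=
        ((Complex.conjCLE.toContinuousLinearMap).comp
            ((ContinuousLinearMap.proj (R := ℝ) (φ := fun _ : Fin M => ℂ) ⟨M - k.1 - 1, by omega⟩).comp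
              (ContinuousLinearMap.fst ℝ (Fin M → ℂ) ℂ))).hasFDerivAt
      exact h1.add (h2.mul h3)
    · simp only [dif_neg h, dif_neg (show ¬ k.1 < M by omega), phiD]
      exact (ContinuousLinearMap.snd ℝ (Fin M → ℂ) ℂ).hasFDerivAt
  rw [hS.fderiv, decompose M y a, LinearMap.det_comp, det_shear,
    my_det_prodMap, det_Amap, LinearMap.det_id]
  ring

end
end

section
/- For every positive integer n and every β > 0: sum over all integer sequences i(1) > j(1) > i(2) > ... > i(L) > j(L) ≥ 0 (for some 1 ≤ L ≤ n) satisfying sum_{u=1}^L (i(u) - j(u)) = n, of prod_{u=1}^L 1/((i(u)β + 1)(j(u)β + 1)), equals prod_{k=1}^n ((1/k)β^{-1} + (k-1)/k). -/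
open Finset

/-- The (countable) type of interlaced integer sequences
`i(1) > j(1) > i(2) > ⋯ > i(L) > j(L) ≥ 0` (for some `1 ≤ L ≤ n`) with total gap sum
`∑_{u=1}^L (i(u) - j(u)) = n`, encoded as pairs of functions `Fin L → ℕ`. -/
def TupleIdx (n : ℕ) : Type :=
  Σ L : ℕ, { p : (Fin L → ℕ) × (Fin L → ℕ) //
    1 ≤ L ∧ L ≤ n ∧ (∀ u : Fin L, p.2 u < p.1 u) ∧
      (∀ u v : Fin L, u.1 + 1 = v.1 → p.1 v < p.2 u) ∧
      ∑ u, (p.1 u - p.2 u) = n }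

open scoped ENNReal NNReal

noncomputable section

namespace ISEB

def aa (β : ℝ) (x : ℕ) : ℝ := 1 / ((x:ℝ) * β + 1)
def rr (β : ℝ) (x : ℕ) : ℝ := (x:ℝ) * β / ((x:ℝ) * β + 1)
def PP (β : ℝ) (n : ℕ) : ℝ :=
  ∏ k ∈ Finset.range n, ((1 / (k + 1 : ℝ)) * β⁻¹ + (k : ℝ) / (k + 1))
def DD (β : ℝ) (n m : ℕ) : ℝ := PP β n * ∏ k ∈ Finset.range n, rr β (m - k)
def VV (β : ℝ) (n m : ℕ) : ℝ :=
  ∑ j ∈ Finset.range m, if m - j ≤ n then aa β j * DD β (n - (m - j)) (j - 1) else 0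

variable {β : ℝ}

lemma den_pos (hβ : 0 < β) (x : ℕ) : 0 < (x:ℝ) * β + 1 := by
  have : (0:ℝ) ≤ (x:ℝ) * β := mul_nonneg (Nat.cast_nonneg x) hβ.le
  linarith
lemma aa_pos (hβ : 0 < β) (x : ℕ) : 0 < aa β x := by
  unfold aa; exact div_pos one_pos (den_pos hβ x)
lemma aa_ne (hβ : 0 < β) (x : ℕ) : aa β x ≠ 0 := (aa_pos hβ x).ne'
lemma rr_nonneg (hβ : 0 < β) (x : ℕ) : 0 ≤ rr β x := by
  unfold rr
  exact div_nonneg (mul_nonneg (Nat.cast_nonneg x) hβ.le) (den_pos hβ x).le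
lemma rr_le_one (hβ : 0 < β) (x : ℕ) : rr β x ≤ 1 := by
  rw [rr, div_le_one (den_pos hβ x)]; linarith
lemma rr_zero : rr β 0 = 0 := by simp [rr]
lemma PP_pos (hβ : 0 < β) (n : ℕ) : 0 < PP β n := by
  refine Finset.prod_pos fun k hk => ?_
  have h1 : (0:ℝ) < k + 1 := by positivity
  have h2 : 0 < 1 / (k+1:ℝ) * β⁻¹ := mul_pos (by positivity) (inv_pos.2 hβ)
  have h3 : 0 ≤ (k:ℝ) / (k+1) := by positivity
  linarith
lemma PP_succ (n : ℕ) :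
    PP β (n+1) = PP β n * ((1 / (n + 1 : ℝ)) * β⁻¹ + (n : ℝ) / (n + 1)) :=
  Finset.prod_range_succ _ n
lemma DD_zero (m : ℕ) : DD β 0 m = 1 := by simp [DD, PP]
lemma DD_eq_zero {n m : ℕ} (h : m < n) : DD β n m = 0 := by
  rw [DD, Finset.prod_eq_zero (Finset.mem_range.2 h) (by simp [Nat.sub_self, rr]), mul_zero]
lemma DD_nonneg (hβ : 0 < β) (n m : ℕ) : 0 ≤ DD β n m :=
  mul_nonneg (PP_pos hβ n).le (Finset.prod_nonneg fun k _ => rr_nonneg hβ _)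
lemma DD_le_PP (hβ : 0 < β) (n m : ℕ) : DD β n m ≤ PP β n := by
  rw [DD]
  nth_rewrite 2 [show PP β n = PP β n * 1 by ring]
  refine mul_le_mul_of_nonneg_left ?_ (PP_pos hβ n).le
  exact Finset.prod_le_one (fun k _ => rr_nonneg hβ _) (fun k _ => rr_le_one hβ _)
lemma VV_nonneg (hβ : 0 < β) (n m : ℕ) : 0 ≤ VV β n m := by
  refine Finset.sum_nonneg fun j _ => ?_
  split
  · exact mul_nonneg (aa_pos hβ j).le (DD_nonneg hβ _ _)
  · exact le_rfl

lemma Qpeel (n m : ℕ) :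
    ∏ k ∈ Finset.range (n+1), rr β (m - k)
      = rr β m * ∏ k ∈ Finset.range n, rr β (m - 1 - k) := by
  rw [Finset.prod_range_succ', Nat.sub_zero, mul_comm]
  congr 1
  refine Finset.prod_congr rfl fun k _ => ?_
  congr 1
  omega

lemma DD_split (n m : ℕ) :
    DD β (n+1) m = PP β (n+1) * (rr β m * ∏ k ∈ Finset.range n, rr β (m-1-k)) := by
  rw [DD, Qpeel]

lemma VV_one (m : ℕ) (hm : 1 ≤ m) : VV β 1 m = aa β (m-1) := by
  rw [VV]
  rw [Finset.sum_eq_single_of_mem (m-1) (Finset.mem_range.2 (by omega))]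
  · rw [if_pos (by omega)]
    have h : 1 - (m - (m-1)) = 0 := by omega
    rw [h, DD_zero, mul_one]
  · intro j hj hne
    rw [if_neg]
    simp only [Finset.mem_range] at hj
    omega

lemma VV_rec (n m : ℕ) (hm : 2 ≤ m) :
    VV β (n+2) m = aa β (m-1) * DD β (n+1) (m-2) + VV β (n+1) (m-1) := by
  rw [VV, show m = (m-1)+1 by omega, Finset.sum_range_succ, show (m-1)+1 = m by omega]
  have h1 : m - (m-1) = 1 := by omega
  rw [h1, if_pos (by omega)]
  have h2 : n + 2 - 1 = n + 1 := by omega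
  have h3 : m - 1 - 1 = m - 2 := by omega
  rw [h2, h3, add_comm]
  congr 1
  rw [VV]
  refine Finset.sum_congr rfl fun j hj => ?_
  simp only [Finset.mem_range] at hj
  by_cases hc : m - j ≤ n + 2
  · rw [if_pos hc, if_pos (by omega)]
    congr 2
    omega
  · rw [if_neg hc, if_neg (by omega)]

lemma scalar1 (hβ : 0 < β) (n : ℕ) :
    ((1/((n:ℝ)+1+1))*β⁻¹ + ((n:ℝ)+1)/((n:ℝ)+1+1)) * rr β (n+2) * aa β (n+1) = aa β (n+2) := by
  have d1 := (den_pos hβ (n+2)).ne'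
  have d2 := (den_pos hβ (n+1)).ne'
  push_cast at d1 d2 ⊢
  rw [rr, aa, aa]
  push_cast
  have h3 : (n:ℝ) + 1 + 1 ≠ 0 := by positivity
  field_simp
  ring

lemma scalar2 (hβ : 0 < β) (n m : ℕ) (hm : n + 3 ≤ m) :
    aa β (m-1) * (((1/((n:ℝ)+1+1))*β⁻¹ + ((n:ℝ)+1)/((n:ℝ)+1+1)) * (rr β m * rr β (m-1)))
      = aa β (m-1) * (((1/((n:ℝ)+1+1))*β⁻¹ + ((n:ℝ)+1)/((n:ℝ)+1+1)) * (rr β (m-1) * rr β (m-2-n)))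
        + aa β m * (aa β (m-1) * aa β (m-1) * rr β (m-2-n) + rr β (m-1) - rr β (m-2-n)) := by
  have c1 : ((m-1:ℕ):ℝ) = (m:ℝ) - 1 := by
    have h : (1:ℕ) ≤ m := by omega
    push_cast [h]; ring
  have c2 : ((m-2-n:ℕ):ℝ) = (m:ℝ) - 2 - (n:ℝ) := by
    have h2 : (2:ℕ) ≤ m := by omega
    have h3 : n ≤ m - 2 := by omega
    push_cast [h3, h2]
    ring
  rw [rr, rr, rr, aa, aa, c1, c2]
  have d1 := (den_pos hβ m).ne'
  have d2 := (den_pos hβ (m-1)).ne'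
  have d3 := (den_pos hβ (m-2-n)).ne'
  rw [c1] at d2
  rw [c2] at d3
  have h4 : (n:ℝ) + 1 + 1 ≠ 0 := by positivity
  have d2' : β * ((m:ℝ) - 1) + 1 ≠ 0 := by rwa [mul_comm] at d2
  have d3' : β * ((m:ℝ) - 2 - n) + 1 ≠ 0 := by rwa [mul_comm] at d3
  field_simp
  ring

lemma PPs (n : ℕ) :
    PP β (n+2) = PP β (n+1) * ((1/((n:ℝ)+1+1))*β⁻¹ + ((n:ℝ)+1)/((n:ℝ)+1+1)) := by
  rw [PP_succ]
  push_cast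
  ring

lemma key (hβ : 0 < β) (n m : ℕ) (hm : 2 ≤ m) :
    aa β (m-1) * DD β (n+2) m
      = aa β (m-1) * DD β (n+2) (m-1)
        + aa β m * (aa β (m-1) * aa β (m-1) * DD β (n+1) (m-2)
            + DD β (n+1) (m-1) - DD β (n+1) (m-2)) := by
  rcases lt_trichotomy m (n+2) with h | h | h
  · rw [DD_eq_zero h, DD_eq_zero (show m-1 < n+2 by omega),
        DD_eq_zero (show m-2 < n+1 by omega), DD_eq_zero (show m-1 < n+1 by omega)]
    ring
  · subst h
    rw [DD_eq_zero (show (n+2)-1 < n+2 by omega), DD_eq_zero (show (n+2)-2 < n+1 by omega)]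
    have e1 : n + 2 - 1 = n + 1 := by omega
    rw [e1]
    rw [DD_split (n+1) (n+2)]
    have e2 : ∀ k, n + 2 - 1 - k = n + 1 - k := by omega
    simp only [e2]
    rw [show DD β (n+1) (n+1) = PP β (n+1) * ∏ k ∈ Finset.range (n+1), rr β (n+1-k) from rfl]
    rw [PPs]
    have hs := scalar1 hβ n
    linear_combination ((PP β (n+1)) * ∏ k ∈ Finset.range (n+1), rr β (n+1-k)) * hs
  · have e : m - 1 - 1 = m - 2 := by omega
    have hA : DD β (n+2) m
        = PP β (n+2) * (rr β m * (rr β (m-1) * ∏ k ∈ Finset.range n, rr β (m-2-k))) := by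
      rw [DD_split (n+1) m, Qpeel n (m-1), e]
    have hB : DD β (n+2) (m-1)
        = PP β (n+2) * (rr β (m-1) * ((∏ k ∈ Finset.range n, rr β (m-2-k)) * rr β (m-2-n))) := by
      rw [DD_split (n+1) (m-1), e, Finset.prod_range_succ]
    have hC : DD β (n+1) (m-1)
        = PP β (n+1) * (rr β (m-1) * ∏ k ∈ Finset.range n, rr β (m-2-k)) := by
      rw [DD_split n (m-1), e]
    have hD2 : DD β (n+1) (m-2)
        = PP β (n+1) * ((∏ k ∈ Finset.range n, rr β (m-2-k)) * rr β (m-2-n)) := by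
      rw [DD, Finset.prod_range_succ]
    rw [hA, hB, hC, hD2, PPs]
    have hs := scalar2 hβ n m (by omega)
    linear_combination (PP β (n+1) * ∏ k ∈ Finset.range n, rr β (m-2-k)) * hs

lemma DD_rec (hβ : 0 < β) : ∀ n m : ℕ, 1 ≤ m →
    DD β (n+1) m = DD β (n+1) (m-1) + aa β m * VV β (n+1) m := by
  intro n
  induction n with
  | zero =>
    intro m hm
    rw [VV_one m hm]
    have hPP1 : PP β 1 = β⁻¹ := by simp [PP]
    have hDD1 : ∀ j, DD β 1 j = β⁻¹ * rr β j := by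
      intro j; rw [DD, hPP1]; simp
    rw [hDD1, hDD1]
    have c1 : ((m-1:ℕ):ℝ) = (m:ℝ) - 1 := by push_cast [hm]; ring
    rw [rr, rr, aa, aa, c1]
    have d1 := (den_pos hβ m).ne'
    have d2 := (den_pos hβ (m-1)).ne'
    rw [c1] at d2
    have d2' : β * ((m:ℝ) - 1) + 1 ≠ 0 := by rwa [mul_comm] at d2
    field_simp
    ring
  | succ n ih =>
    intro m hm
    rcases eq_or_lt_of_le hm with h1 | h1
    · -- m = 1
      rw [← h1]
      rw [DD_eq_zero (show 1 < n+2 by omega), DD_eq_zero (show 1-1 < n+2 by omega)]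
      have hV : VV β (n+2) 1 = 0 := by
        rw [VV, Finset.sum_range_one, if_pos (by omega)]
        rw [show n + 2 - (1 - 0) = n+1 by omega]
        rw [DD_eq_zero (show 0-1 < n+1 by omega), mul_zero]
      rw [hV]
      ring
    · -- m ≥ 2
      have hm2 : 2 ≤ m := h1
      rw [VV_rec n m hm2]
      have hIH := ih (m-1) (by omega)
      rw [show m - 1 - 1 = m - 2 by omega] at hIH
      have hV' : aa β (m-1) * VV β (n+1) (m-1) = DD β (n+1) (m-1) - DD β (n+1) (m-2) := by
        linarith [hIH]
      have hk := key hβ n m hm2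
      apply mul_left_cancel₀ (aa_ne hβ (m-1))
      linear_combination hk - aa β m * hV'


/-! ## Combinatorial part: sums over lists of pairs -/

open Classical in
/-- validity of an interlaced list of pairs -/
def Ok (l : List (ℕ×ℕ)) : Prop :=
  (∀ p ∈ l, p.2 < p.1) ∧ l.Chain' (fun p q => q.1 < p.2)

def gs (l : List (ℕ×ℕ)) : ℕ := (l.map fun p => p.1 - p.2).sum

def wE (β : ℝ) (p : ℕ×ℕ) : ℝ≥0∞ := ENNReal.ofReal (aa β p.1 * aa β p.2)

def wl (β : ℝ) (l : List (ℕ×ℕ)) : ℝ≥0∞ := (l.map (wE β)).prod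

open Classical in
def FF (β : ℝ) (n b : ℕ) (l : List (ℕ×ℕ)) : ℝ≥0∞ :=
  if Ok l ∧ gs l = n ∧ ∀ p ∈ l, p.1 < b then wl β l else 0

def SB (β : ℝ) (n b : ℕ) : ℝ≥0∞ := ∑' l : List (ℕ×ℕ), FF β n b l

lemma Ok_nil : Ok ([] : List (ℕ×ℕ)) := ⟨by simp, List.isChain_nil⟩

lemma gs_nil : gs ([] : List (ℕ×ℕ)) = 0 := by simp [gs]

lemma gs_cons (p : ℕ×ℕ) (r : List (ℕ×ℕ)) : gs (p :: r) = (p.1 - p.2) + gs r := by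
  simp [gs]

lemma wl_nil : wl β [] = 1 := by simp [wl]

lemma wl_cons (p : ℕ×ℕ) (r : List (ℕ×ℕ)) : wl β (p :: r) = wE β p * wl β r := by
  simp [wl]

lemma lt_of_ok : ∀ (r : List (ℕ×ℕ)) (p : ℕ×ℕ), Ok (p :: r) → ∀ q ∈ r, q.1 < p.2 := by
  intro r
  induction r with
  | nil => simp
  | cons q s ih =>
    intro p hOk q' hq'
    have hchain : q.1 < p.2 ∧ (q :: s).Chain' (fun p q => q.1 < p.2) :=
      List.isChain_cons_cons.1 hOk.2
    rcases List.mem_cons.1 hq' with rfl | hmem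
    · exact hchain.1
    · have hOk' : Ok (q :: s) := ⟨fun x hx => hOk.1 x (List.mem_cons_of_mem _ hx), hchain.2⟩
      have h1 := ih q hOk' q' hmem
      have h2 : q.2 < q.1 := hOk.1 q (by simp)
      omega

lemma ok_cons_of (p : ℕ×ℕ) (r : List (ℕ×ℕ)) (hp : p.2 < p.1) (hr : Ok r)
    (hb : ∀ q ∈ r, q.1 < p.2) : Ok (p :: r) := by
  constructor
  · intro q hq
    rcases List.mem_cons.1 hq with rfl | hmem
    · exact hp
    · exact hr.1 q hmem
  · cases r with
    | nil => exact List.isChain_singleton _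
    | cons q s => exact List.isChain_cons_cons.2 ⟨hb q (by simp), hr.2⟩

lemma ok_tail (p : ℕ×ℕ) (r : List (ℕ×ℕ)) (h : Ok (p :: r)) : Ok r :=
  ⟨fun x hx => h.1 x (List.mem_cons_of_mem _ hx), h.2.tail⟩

lemma cond_iff (n b : ℕ) (p : ℕ×ℕ) (r : List (ℕ×ℕ)) :
    (Ok (p::r) ∧ gs (p::r) = n ∧ ∀ q ∈ p::r, q.1 < b)
      ↔ (p.2 < p.1 ∧ p.1 < b ∧ p.1 - p.2 ≤ n)
          ∧ (Ok r ∧ gs r = n - (p.1-p.2) ∧ ∀ q ∈ r, q.1 < p.2) := by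
  constructor
  · rintro ⟨hOk, hgs, hb⟩
    have hp : p.2 < p.1 := hOk.1 p (by simp)
    have hgs' := gs_cons p r ▸ hgs
    refine ⟨⟨hp, hb p (by simp), by omega⟩, ok_tail p r hOk, by omega, lt_of_ok r p hOk⟩
  · rintro ⟨⟨hp, hpb, hpn⟩, hOk, hgs, hb⟩
    refine ⟨ok_cons_of p r hp hOk hb, ?_, ?_⟩
    · rw [gs_cons, hgs]; omega
    · intro q hq
      rcases List.mem_cons.1 hq with rfl | hmem
      · exact hpb
      · have := hb q hmem
        omega

open Classical in
lemma FF_cons (β : ℝ) (n b : ℕ) (p : ℕ×ℕ) (r : List (ℕ×ℕ)) :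
    FF β n b (p :: r)
      = if p.2 < p.1 ∧ p.1 < b ∧ p.1 - p.2 ≤ n
          then wE β p * FF β (n - (p.1-p.2)) p.2 r else 0 := by
  by_cases hc : p.2 < p.1 ∧ p.1 < b ∧ p.1 - p.2 ≤ n
  · rw [if_pos hc]
    by_cases hr : Ok r ∧ gs r = n - (p.1-p.2) ∧ ∀ q ∈ r, q.1 < p.2
    · rw [FF, if_pos ((cond_iff n b p r).2 ⟨hc, hr⟩), FF, if_pos hr, wl_cons]
    · rw [FF, if_neg, FF, if_neg hr, mul_zero]
      intro hfull
      exact hr ((cond_iff n b p r).1 hfull).2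
  · rw [if_neg hc, FF, if_neg]
    intro hfull
    exact hc ((cond_iff n b p r).1 hfull).1

open Classical in
lemma FF_nil (β : ℝ) (n b : ℕ) : FF β n b [] = if n = 0 then 1 else 0 := by
  rw [FF]
  by_cases hn : n = 0
  · rw [if_pos, if_pos hn, wl_nil]
    exact ⟨Ok_nil, by simp [gs_nil, hn], by simp⟩
  · rw [if_neg, if_neg hn]
    rintro ⟨-, h, -⟩
    rw [gs_nil] at h
    omega


open Classical in
def GG (β : ℝ) (n i : ℕ) : ℝ≥0∞ :=
  ∑ j ∈ Finset.range i, if i - j ≤ n then wE β (i,j) * SB β (n - (i-j)) j else 0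

open Classical in
lemma SB_rec (β : ℝ) (n b : ℕ) :
    SB β n b = (if n = 0 then 1 else 0) + ∑ i ∈ Finset.range b, GG β n i := by
  rw [SB, ENNReal.tsum_eq_add_tsum_ite ([] : List (ℕ×ℕ)), FF_nil]
  congr 1
  have hinj : Function.Injective (fun pr : (ℕ×ℕ) × List (ℕ×ℕ) => pr.1 :: pr.2) := by
    rintro ⟨p,r⟩ ⟨q,s⟩ h
    simp only [List.cons.injEq] at h
    exact Prod.ext h.1 h.2
  have hsupp : Function.support (fun l => if l = ([]:List (ℕ×ℕ)) then 0 else FF β n b l)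
      ⊆ Set.range (fun pr : (ℕ×ℕ) × List (ℕ×ℕ) => pr.1 :: pr.2) := by
    intro l hl
    rcases l with _ | ⟨p, r⟩
    · simp at hl
    · exact ⟨(p, r), rfl⟩
  have step1 : (∑' (x : List (ℕ×ℕ)), @ite ℝ≥0∞ (x = []) (Classical.propDecidable _) 0 (FF β n b x))
      = ∑' (x : List (ℕ×ℕ)), (if x = [] then 0 else FF β n b x) :=
    tsum_congr fun l => by by_cases h : l = [] <;> simp [h]
  rw [step1, ← hinj.tsum_eq hsupp]
  have h1 : ∀ pr : (ℕ×ℕ) × List (ℕ×ℕ),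
      (if pr.1::pr.2 = [] then 0 else FF β n b (pr.1::pr.2)) = FF β n b (pr.1::pr.2) := by
    intro pr; rw [if_neg (by simp)]
  rw [tsum_congr h1, ENNReal.tsum_prod']
  have h2 : ∀ p : ℕ×ℕ, ∑' r, FF β n b (p :: r)
      = if p.2 < p.1 ∧ p.1 < b ∧ p.1 - p.2 ≤ n
          then wE β p * SB β (n - (p.1-p.2)) p.2 else 0 := by
    intro p
    rw [tsum_congr (fun r => FF_cons β n b p r)]
    by_cases hc : p.2 < p.1 ∧ p.1 < b ∧ p.1 - p.2 ≤ n
    · simp only [if_pos hc]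
      rw [ENNReal.tsum_mul_left]
      rfl
    · simp only [if_neg hc]
      exact tsum_zero
  rw [tsum_congr h2]
  rw [tsum_eq_sum (s := Finset.range b ×ˢ Finset.range b)
      (by
        intro p hp
        rw [if_neg]
        intro hcond
        apply hp
        rw [Finset.mem_product, Finset.mem_range, Finset.mem_range]
        omega)]
  rw [Finset.sum_product]
  refine Finset.sum_congr rfl fun i hi => ?_
  simp only [Finset.mem_range] at hi
  rw [GG, ← Finset.sum_subset (Finset.range_subset_range.2 hi.le)
      (by
        intro j hj hj2
        rw [if_neg]
        simp only [Finset.mem_range] at hj hj2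
        omega)]
  refine Finset.sum_congr rfl fun j hj => ?_
  simp only [Finset.mem_range] at hj
  have : ((i,j).2 < (i,j).1 ∧ (i,j).1 < b ∧ (i,j).1 - (i,j).2 ≤ n) ↔ (i - j ≤ n) := by
    simp only []
    constructor
    · exact fun h => h.2.2
    · exact fun h => ⟨hj, hi, h⟩
  rw [if_congr this rfl rfl]

lemma SB_zero (β : ℝ) (b : ℕ) : SB β 0 b = 1 := by
  rw [SB_rec, if_pos rfl]
  have : ∀ i ∈ Finset.range b, GG β 0 i = 0 := by
    intro i _
    rw [GG]
    refine Finset.sum_eq_zero fun j hj => ?_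
    simp only [Finset.mem_range] at hj
    rw [if_neg (by omega)]
  rw [Finset.sum_congr rfl this]
  simp

lemma SB_succ (β : ℝ) (n b : ℕ) : SB β n (b+1) = SB β n b + GG β n b := by
  rw [SB_rec β n (b+1), SB_rec β n b, Finset.sum_range_succ, ← add_assoc]

lemma SBD (hβ : 0 < β) : ∀ n b : ℕ, SB β n b = ENNReal.ofReal (DD β n (b-1)) := by
  intro n
  induction n using Nat.strong_induction_on with
  | _ n ihn =>
  match n with
  | 0 =>
    intro b
    rw [SB_zero, DD_zero, ENNReal.ofReal_one]
  | (n'+1) =>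
    intro b
    induction b with
    | zero =>
      rw [SB_rec]
      simp only [Finset.range_zero, Finset.sum_empty, if_neg (Nat.succ_ne_zero n'), add_zero]
      rw [show (0:ℕ) - 1 = 0 from rfl, DD_eq_zero (Nat.succ_pos n'), ENNReal.ofReal_zero]
    | succ b ihb =>
      rw [SB_succ, ihb]
      have hGG : GG β (n'+1) b = ENNReal.ofReal (aa β b * VV β (n'+1) b) := by
        have hv : aa β b * VV β (n'+1) b
            = ∑ j ∈ Finset.range b,
                (if b - j ≤ n'+1 then aa β b * (aa β j * DD β ((n'+1)-(b-j)) (j-1)) else 0) := by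
          rw [VV, Finset.mul_sum]
          refine Finset.sum_congr rfl fun j _ => ?_
          rw [mul_ite, mul_zero]
        rw [hv, ENNReal.ofReal_sum_of_nonneg
            (by
              intro j _
              split
              · have := aa_pos hβ b
                have := aa_pos hβ j
                have := DD_nonneg hβ ((n'+1)-(b-j)) (j-1)
                positivity
              · exact le_rfl)]
        rw [GG]
        refine Finset.sum_congr rfl fun j hj => ?_
        simp only [Finset.mem_range] at hj
        by_cases hc : b - j ≤ n'+1
        · rw [if_pos hc, if_pos hc]
          have hlt : (n'+1) - (b-j) < n'+1 := by omega
          rw [ihn _ hlt j, wE]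
          rw [← ENNReal.ofReal_mul (by
            have := aa_pos hβ b
            have := aa_pos hβ j
            positivity)]
          congr 1
          ring
        · rw [if_neg hc, if_neg hc, ENNReal.ofReal_zero]
      rw [hGG, ← ENNReal.ofReal_add (DD_nonneg hβ _ _)
          (mul_nonneg (aa_pos hβ b).le (VV_nonneg hβ _ _))]
      congr 1
      rcases Nat.eq_zero_or_pos b with rfl | hb
      · have hV0 : VV β (n'+1) 0 = 0 := by
          rw [VV]; simp
        rw [hV0, mul_zero, add_zero]
      · have := DD_rec hβ n' b hb
        rw [show (b+1) - 1 = b from rfl]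
        linarith [this]


open Classical in
def FFU (β : ℝ) (n : ℕ) (l : List (ℕ×ℕ)) : ℝ≥0∞ :=
  if Ok l ∧ gs l = n then wl β l else 0

def SU (β : ℝ) (n : ℕ) : ℝ≥0∞ := ∑' l : List (ℕ×ℕ), FFU β n l

def bnd (l : List (ℕ×ℕ)) : ℕ := (l.map Prod.fst).foldr max 0 + 1

lemma le_foldr_max : ∀ (L : List ℕ), ∀ x ∈ L, x ≤ L.foldr max 0 := by
  intro L
  induction L with
  | nil => simp
  | cons a t ih =>
    intro x hx
    rcases List.mem_cons.1 hx with rfl | hmem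
    · exact le_max_left _ _
    · exact le_trans (ih x hmem) (le_max_right _ _)

lemma lt_bnd (l : List (ℕ×ℕ)) : ∀ q ∈ l, q.1 < bnd l := by
  intro q hq
  have : q.1 ≤ (l.map Prod.fst).foldr max 0 :=
    le_foldr_max _ _ (List.mem_map_of_mem (f := Prod.fst) hq)
  simp only [bnd]
  omega

open Classical in
lemma SU_eq (β : ℝ) (n : ℕ) : SU β n = ⨆ b, SB β n b := by
  apply le_antisymm
  · rw [SU, ENNReal.tsum_eq_iSup_sum]
    refine iSup_le fun s => ?_
    have hstep : ∑ l ∈ s, FFU β n l ≤ ∑ l ∈ s, FF β n (s.sup bnd) l := by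
      refine Finset.sum_le_sum fun l hl => ?_
      by_cases h : Ok l ∧ gs l = n
      · have hcond : Ok l ∧ gs l = n ∧ ∀ q ∈ l, q.1 < s.sup bnd :=
          ⟨h.1, h.2, fun q hq => lt_of_lt_of_le (lt_bnd l q hq) (Finset.le_sup hl)⟩
        rw [FFU, if_pos h, FF, if_pos hcond]
      · rw [FFU, if_neg h]
        exact zero_le
    refine le_trans hstep (le_trans
      (ENNReal.sum_le_tsum s : ∑ l ∈ s, FF β n (s.sup bnd) l ≤ SB β n (s.sup bnd))
      (le_iSup (fun b => SB β n b) (s.sup bnd)))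
  · refine iSup_le fun b => Summable.tsum_le_tsum (fun l => ?_) ENNReal.summable ENNReal.summable
    rw [FF, FFU]
    by_cases h : Ok l ∧ gs l = n ∧ ∀ q ∈ l, q.1 < b
    · rw [if_pos h, if_pos ⟨h.1, h.2.1⟩]
    · rw [if_neg h]
      exact zero_le

lemma rr_tendsto (hβ : 0 < β) : Filter.Tendsto (fun x : ℕ => rr β x) Filter.atTop (nhds 1) := by
  have ha : Filter.Tendsto (fun x : ℕ => (x:ℝ)*β+1) Filter.atTop Filter.atTop := by
    refine Filter.tendsto_atTop_add_const_right _ 1 ?_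
    exact Filter.Tendsto.atTop_mul_const hβ tendsto_natCast_atTop_atTop
  have h0 : Filter.Tendsto (fun x : ℕ => 1/((x:ℝ)*β+1)) Filter.atTop (nhds 0) := by
    simpa [one_div, Pi.inv_def] using ha.inv_tendsto_atTop
  have h1 := h0.const_sub 1
  simp only [sub_zero] at h1
  refine h1.congr fun x => ?_
  rw [rr]
  have := (den_pos hβ x).ne'
  field_simp
  ring

lemma DD_tendsto (hβ : 0 < β) (n : ℕ) :
    Filter.Tendsto (fun m => DD β n m) Filter.atTop (nhds (PP β n)) := by
  have hp : Filter.Tendsto (fun m => ∏ k ∈ Finset.range n, rr β (m-k)) Filter.atTop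
      (nhds (∏ _k ∈ Finset.range n, (1:ℝ))) := by
    refine tendsto_finset_prod _ fun k _ => ?_
    exact (rr_tendsto hβ).comp (Filter.tendsto_sub_atTop_nat k)
  simp only [Finset.prod_const_one] at hp
  have := hp.const_mul (PP β n)
  simpa [DD] using this

lemma DD_mono (hβ : 0 < β) (n' : ℕ) : Monotone (fun m => DD β (n'+1) m) := by
  refine monotone_nat_of_le_succ fun m => ?_
  have h := DD_rec hβ n' (m+1) (by omega)
  rw [show (m+1)-1 = m from rfl] at h
  have h2 : 0 ≤ aa β (m+1) * VV β (n'+1) (m+1) :=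
    mul_nonneg (aa_pos hβ _).le (VV_nonneg hβ _ _)
  show DD β (n'+1) m ≤ DD β (n'+1) (m+1)
  linarith

lemma SU_eq_PP (hβ : 0 < β) (n' : ℕ) : SU β (n'+1) = ENNReal.ofReal (PP β (n'+1)) := by
  have hbdd : BddAbove (Set.range fun m => DD β (n'+1) m) := by
    refine ⟨PP β (n'+1), ?_⟩
    rintro x ⟨m, rfl⟩
    exact DD_le_PP hβ _ m
  have hsup : (⨆ m, DD β (n'+1) m) = PP β (n'+1) :=
    tendsto_nhds_unique (tendsto_atTop_ciSup (DD_mono hβ n') hbdd) (DD_tendsto hβ (n'+1))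
  rw [SU_eq]
  have h1 : ∀ b : ℕ, SB β (n'+1) b = ENNReal.ofReal (DD β (n'+1) (b-1)) := SBD hβ (n'+1)
  have h2 : (⨆ b, SB β (n'+1) b) = ⨆ m, ENNReal.ofReal (DD β (n'+1) m) := by
    apply le_antisymm
    · refine iSup_le fun b => ?_
      rw [h1 b]
      exact le_iSup (fun m => ENNReal.ofReal (DD β (n'+1) m)) (b-1)
    · refine iSup_le fun m => ?_
      have he : ENNReal.ofReal (DD β (n'+1) m) = SB β (n'+1) (m+1) := by
        rw [h1 (m+1), show m+1-1 = m from rfl]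
      rw [he]
      exact le_iSup _ (m+1)
  rw [h2, ← hsup]
  exact (Monotone.map_ciSup_of_continuousAt
    (ENNReal.continuous_ofReal.continuousAt)
    (fun _ _ h => ENNReal.ofReal_le_ofReal h) hbdd).symm

def Psi (n L : ℕ) (v : Fin L → ℕ×ℕ) : Prop :=
  1 ≤ L ∧ L ≤ n ∧ (∀ u : Fin L, (v u).2 < (v u).1) ∧
    (∀ u w : Fin L, u.1 + 1 = w.1 → (v w).1 < (v u).2) ∧ ∑ u, ((v u).1 - (v u).2) = n

def sigmaSubtype {α : Type*} {B : α → Type*} (P : ∀ a, B a → Prop) :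
    (Σ a, {b : B a // P a b}) ≃ {x : Σ a, B a // P x.1 x.2} where
  toFun x := ⟨⟨x.1, x.2.1⟩, x.2.2⟩
  invFun x := ⟨x.1.1, x.1.2, x.2⟩
  left_inv x := rfl
  right_inv x := rfl

lemma psi_iff {n : ℕ} (hn : 1 ≤ n) (L : ℕ) (v : Fin L → ℕ×ℕ) :
    Psi n L v ↔ (Ok (List.ofFn v) ∧ gs (List.ofFn v) = n) := by
  have hgs : gs (List.ofFn v) = ∑ u, ((v u).1 - (v u).2) := by
    rw [gs, List.map_ofFn, List.sum_ofFn]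
    rfl
  have hpair : (∀ p ∈ List.ofFn v, p.2 < p.1) ↔ ∀ u : Fin L, (v u).2 < (v u).1 := by
    constructor
    · intro h u
      exact h (v u) ((List.mem_ofFn (f := v)).2 ⟨u, rfl⟩)
    · intro h p hp
      obtain ⟨u, rfl⟩ := (List.mem_ofFn (f := v) (a := p)).1 hp
      exact h u
  have hchain : (List.ofFn v).Chain' (fun p q => q.1 < p.2)
      ↔ ∀ u w : Fin L, u.1 + 1 = w.1 → (v w).1 < (v u).2 := by
    show List.IsChain _ _ ↔ _
    rw [List.isChain_ofFn]
    constructor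
    · intro h u w huw
      obtain ⟨w, hw⟩ := w
      obtain ⟨u, hu⟩ := u
      simp only at huw
      subst huw
      exact h u hw
    · intro h i hi
      exact h _ _ (by simp)
  constructor
  · rintro ⟨h1, h2, h3, h4, h5⟩
    exact ⟨⟨hpair.2 h3, hchain.2 h4⟩, by rw [hgs]; exact h5⟩
  · rintro ⟨⟨hp, hc⟩, hg⟩
    rw [hgs] at hg
    have h3 := hpair.1 hp
    have hL1 : 1 ≤ L := by
      rcases Nat.eq_zero_or_pos L with rfl | h
      · simp at hg; omega
      · exact h
    have hLn : L ≤ n := by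
      have hstep : ∀ u : Fin L, 1 ≤ (v u).1 - (v u).2 := fun u => by have := h3 u; omega
      calc L = ∑ _u : Fin L, 1 := by simp
        _ ≤ ∑ u, ((v u).1 - (v u).2) := Finset.sum_le_sum (fun u _ => hstep u)
        _ = n := hg
    exact ⟨hL1, hLn, h3, hchain.1 hc, hg⟩

def listEquiv (n : ℕ) (hn : 1 ≤ n) : TupleIdx n ≃ {l : List (ℕ×ℕ) // Ok l ∧ gs l = n} :=
  ((Equiv.sigmaCongrRight (fun L =>
      (Equiv.subtypeEquiv ((Equiv.arrowProdEquivProdArrow (Fin L) (fun _ => ℕ) (fun _ => ℕ)).symm)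
        (fun _ => Iff.rfl) :
      _ ≃ {v : Fin L → ℕ×ℕ // Psi n L v}))).trans
    ((sigmaSubtype (Psi n)).trans
      (Equiv.subtypeEquiv (List.equivSigmaTuple (α := ℕ×ℕ)).symm
        (fun x => psi_iff hn x.1 x.2))))

lemma listEquiv_coe (n : ℕ) (hn : 1 ≤ n) (t : TupleIdx n) :
    ((listEquiv n hn t) : List (ℕ×ℕ)) = List.ofFn (fun u => (t.2.1.1 u, t.2.1.2 u)) := rfl

end ISEB

end

open ISEB in
/-- For every `n ≥ 1` and `β > 0`:
`∑ ∏_{u=1}^L 1/((i(u)β + 1)(j(u)β + 1)) = ∏_{k=1}^n ((1/k) β⁻¹ + (k-1)/k)`,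
summed over all interlaced sequences `i(1) > j(1) > ⋯ > i(L) > j(L) ≥ 0` with total gap
sum `n` (a factor with index `0` contributes `1/(0·β+1) = 1`). -/
theorem interlaced_sum_eq_bernoulli_product (n : ℕ) (hn : 1 ≤ n) (β : ℝ) (hβ : 0 < β) :
    ∑' t : TupleIdx n, ∏ u : Fin t.1,
        (1 : ℝ) / (((t.2.1.1 u : ℝ) * β + 1) * ((t.2.1.2 u : ℝ) * β + 1))
      = ∏ k ∈ Finset.range n, ((1 / (k + 1 : ℝ)) * β⁻¹ + (k : ℝ) / (k + 1)) := by
  obtain ⟨n', rfl⟩ : ∃ n', n = n' + 1 := ⟨n - 1, by omega⟩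
  set N := n' + 1 with hN
  set w : TupleIdx N → ℝ := fun t => ∏ u : Fin t.1,
      (1 : ℝ) / (((t.2.1.1 u : ℝ) * β + 1) * ((t.2.1.2 u : ℝ) * β + 1)) with hwdef
  have hw0 : ∀ t, 0 ≤ w t := by
    intro t
    refine Finset.prod_nonneg fun u _ => ?_
    have hd1 := den_pos hβ (t.2.1.1 u)
    have hd2 := den_pos hβ (t.2.1.2 u)
    exact le_of_lt (div_pos one_pos (mul_pos hd1 hd2))
  have hofReal : ∀ t : TupleIdx N,
      ENNReal.ofReal (w t) = wl β ((listEquiv N (by omega) t) : List (ℕ×ℕ)) := by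
    intro t
    rw [listEquiv_coe, wl, List.map_ofFn, List.prod_ofFn]
    rw [hwdef]
    rw [ENNReal.ofReal_prod_of_nonneg (fun u _ => by
      have hd1 := den_pos hβ (t.2.1.1 u)
      have hd2 := den_pos hβ (t.2.1.2 u)
      exact le_of_lt (div_pos one_pos (mul_pos hd1 hd2)))]
    refine Finset.prod_congr rfl fun u _ => ?_
    show ENNReal.ofReal _ = wE β (t.2.1.1 u, t.2.1.2 u)
    rw [wE]
    congr 1
    rw [aa, aa, div_mul_div_comm, one_mul]
  have key : ∑' t : TupleIdx N, ENNReal.ofReal (w t) = ENNReal.ofReal (PP β N) := by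
    rw [tsum_congr hofReal]
    rw [Equiv.tsum_eq (listEquiv N (by omega)) (fun l : {l : List (ℕ×ℕ) // Ok l ∧ gs l = N} => wl β l.1)]
    have hSU : ∑' l : {l : List (ℕ×ℕ) // Ok l ∧ gs l = N}, wl β l.1 = SU β N := by
      rw [SU]
      refine Eq.trans (tsum_subtype {l : List (ℕ×ℕ) | Ok l ∧ gs l = N} (wl β)) ?_
      refine tsum_congr fun l => ?_
      classical
      rw [Set.indicator_apply, FFU]
      split_ifs with h1 h2 h2 <;> first | rfl | (exfalso; exact h2 h1) | (exfalso; exact h1 h2)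
    rw [hSU]
    exact SU_eq_PP hβ n'
  set g : TupleIdx N → ℝ≥0 := fun t => Real.toNNReal (w t) with hgdef
  have hg : ∀ t, (g t : ℝ≥0∞) = ENNReal.ofReal (w t) := fun t => rfl
  have hne : (∑' t, (g t : ℝ≥0∞)) ≠ ⊤ := by
    rw [tsum_congr hg, key]; exact ENNReal.ofReal_ne_top
  have hsum : Summable g := ENNReal.tsum_coe_ne_top_iff_summable.1 hne
  have h1 : ((∑' t, g t : ℝ≥0) : ℝ≥0∞) = ENNReal.ofReal (PP β N) := by
    rw [ENNReal.coe_tsum hsum, tsum_congr hg, key]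
  have h2 : ∀ t, w t = ((g t : ℝ≥0) : ℝ) := fun t => (Real.coe_toNNReal _ (hw0 t)).symm
  have h3 : (∑' t, g t) = Real.toNNReal (PP β N) := by
    rw [ENNReal.ofReal] at h1
    exact_mod_cast h1
  have main : ∑' t, w t = PP β N := by
    rw [tsum_congr h2, ← NNReal.coe_tsum, h3, Real.coe_toNNReal _ (PP_pos hβ N).le]
  exact main
end

section
/- Let p and q be finitely supported multi-indices with deg(p) ≠ deg(q), and let f_n be independent complex random variables whose distributions are invariant under rotation f_n ↦ e^{-inθ}f_n for all θ (e.g., the Gaussians with density (nβ/π)e^{-nβ|f_n|²}). With x = exp(-f_+) = 1 + sum x_n z^n, one has E( prod_n x_n^{p(n)} · conj(prod_m x_m^{q(m)}) ) = 0. -/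
open Finset MeasureTheory

/-- The `n`-th coefficient of `x = exp(-f_+)`, `f_+ = ∑_{i≥1} a_i z^i`. -/
noncomputable def xGauss (n : ℕ) (a : ℕ → ℂ) : ℂ :=
  ∑ J ∈ MIdeg n, ((-1 : ℂ) ^ (∑ u, J u) / (∏ u, Nat.factorial (J u) : ℕ)) *
    ∏ u : Fin n, (a (u.1 + 1)) ^ (J u)

lemma xGauss_rot (n : ℕ) (θ : ℝ) (a : ℕ → ℂ) :
    xGauss n (fun m : ℕ => Complex.exp (-((m : ℝ) * θ) * Complex.I) * a m)
      = Complex.exp (-((n : ℝ) * θ) * Complex.I) * xGauss n a := by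
  unfold xGauss
  rw [Finset.mul_sum]
  refine Finset.sum_congr rfl fun J hJ => ?_
  have hdeg : ∑ u, (u.1 + 1) * J u = n := by
    simp only [MIdeg, Finset.mem_filter] at hJ; exact hJ.2
  simp only [mul_pow, Finset.prod_mul_distrib]
  have hexp : ∏ u : Fin n, (Complex.exp (-(((u.1 + 1 : ℕ) : ℝ) * θ) * Complex.I)) ^ (J u)
      = Complex.exp (-((n : ℝ) * θ) * Complex.I) := by
    simp only [← Complex.exp_nat_mul, ← Complex.exp_sum]
    congr 1
    have h1 : ∑ u : Fin n, (J u : ℂ) * (-(((u.1 + 1 : ℕ) : ℝ) * θ) * Complex.I)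
        = (((∑ u, (u.1 + 1) * J u : ℕ)) : ℂ) * (-(θ : ℂ) * Complex.I) := by
      push_cast
      rw [Finset.sum_mul]
      exact Finset.sum_congr rfl fun u _ => by ring
    rw [h1, hdeg]; push_cast; ring
  rw [hexp]; ring

lemma prod_xGauss_rot (p : ℕ →₀ ℕ) (θ : ℝ) (a : ℕ → ℂ) :
    ∏ n ∈ p.support, (xGauss n (fun m : ℕ => Complex.exp (-((m : ℝ) * θ) * Complex.I) * a m)) ^ (p n)
      = Complex.exp (-(((p.sum fun n k => n * k : ℕ) : ℝ) * θ) * Complex.I) *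
        ∏ n ∈ p.support, (xGauss n a) ^ (p n) := by
  simp only [xGauss_rot, mul_pow, Finset.prod_mul_distrib]
  congr 1
  simp only [← Complex.exp_nat_mul, ← Complex.exp_sum]
  congr 1
  have h1 : ∑ x ∈ p.support, (p x : ℂ) * (-((x : ℝ) * θ) * Complex.I)
      = (((p.sum fun n k => n * k : ℕ)) : ℂ) * (-(θ : ℂ) * Complex.I) := by
    rw [Finsupp.sum]
    push_cast
    rw [Finset.sum_mul]
    exact Finset.sum_congr rfl fun u _ => by ring
  rw [h1]; simp only [Complex.ofReal_natCast]; ring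

/-- If the joint law of the coefficients `(f_n)` is invariant under the rotations
`f_n ↦ e^{-inθ} f_n`, the monomial `x^p conj(x^q)` is integrable, and
`deg p ≠ deg q`, then `E(∏ x_n^{p(n)} ⋅ conj(∏ x_m^{q(m)})) = 0`. -/
theorem rotation_invariance_vanishing (μ : Measure (ℕ → ℂ)) [IsProbabilityMeasure μ]
    (hrot : ∀ θ : ℝ,
      μ.map (fun a : ℕ → ℂ => fun n : ℕ => Complex.exp (-((n : ℝ) * θ) * Complex.I) * a n) = μ)
    (p q : ℕ →₀ ℕ)
    (hdeg : (p.sum fun n k => n * k) ≠ (q.sum fun n k => n * k))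
    (hint : Integrable
      (fun a : ℕ → ℂ => (∏ n ∈ p.support, (xGauss n a) ^ (p n)) *
        (starRingEnd ℂ) (∏ m ∈ q.support, (xGauss m a) ^ (q m))) μ) :
    ∫ a, (∏ n ∈ p.support, (xGauss n a) ^ (p n)) *
        (starRingEnd ℂ) (∏ m ∈ q.support, (xGauss m a) ^ (q m)) ∂μ = 0 := by

  set Sp : ℕ := p.sum fun n k => n * k with hSp
  set Sq : ℕ := q.sum fun n k => n * k with hSq
  have hne : (Sp : ℝ) - Sq ≠ 0 := by
    intro h
    exact hdeg (by exact_mod_cast sub_eq_zero.mp h)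
  set θ : ℝ := Real.pi / ((Sp : ℝ) - Sq) with hθ
  have hpi : ((Sp : ℝ) - Sq) * θ = Real.pi := by
    rw [hθ]; field_simp
  set rot : (ℕ → ℂ) → (ℕ → ℂ) :=
    fun a : ℕ → ℂ => fun n : ℕ => Complex.exp (-((n : ℝ) * θ) * Complex.I) * a n with hrotdef
  have hmeas : Measurable rot :=
    measurable_pi_lambda _ fun n => (measurable_pi_apply n).const_mul _
  set F : (ℕ → ℂ) → ℂ := fun a : ℕ → ℂ =>
    (∏ n ∈ p.support, (xGauss n a) ^ (p n)) *
      (starRingEnd ℂ) (∏ m ∈ q.support, (xGauss m a) ^ (q m)) with hF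
  have hkey : ∀ a, F (rot a) = -F a := by
    intro a
    have hp := prod_xGauss_rot p θ a
    have hq := prod_xGauss_rot q θ a
    simp only [hF, hrotdef] at *
    rw [hp, hq, map_mul]
    have hconj : (starRingEnd ℂ) (Complex.exp (-((Sq : ℝ) * θ) * Complex.I))
        = Complex.exp (((Sq : ℝ) * θ) * Complex.I) := by
      rw [← Complex.exp_conj]
      congr 1
      simp only [map_neg, map_mul, Complex.conj_I, Complex.conj_ofReal]
      ring
    rw [hconj]
    have hc : Complex.exp (-((Sp : ℝ) * θ) * Complex.I) *
        Complex.exp (((Sq : ℝ) * θ) * Complex.I) = -1 := by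
      rw [← Complex.exp_add]
      have hr : (Sp : ℝ) * θ - (Sq : ℝ) * θ = Real.pi := by
        rw [← sub_mul]; exact hpi
      have hc2 : (Sp : ℂ) * (θ : ℂ) - (Sq : ℂ) * (θ : ℂ) = (Real.pi : ℂ) := by
        exact_mod_cast hr
      have : (-((Sp : ℝ) * θ) * Complex.I) + (((Sq : ℝ) * θ) * Complex.I)
          = -(Real.pi * Complex.I) := by
        push_cast
        linear_combination (-Complex.I) * hc2
      rw [this, Complex.exp_neg, Complex.exp_pi_mul_I]
      norm_num
    calc Complex.exp (-((Sp : ℝ) * θ) * Complex.I) * (∏ n ∈ p.support, xGauss n a ^ p n) *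
          (Complex.exp (((Sq : ℝ) * θ) * Complex.I) *
            (starRingEnd ℂ) (∏ m ∈ q.support, xGauss m a ^ q m))
        = (Complex.exp (-((Sp : ℝ) * θ) * Complex.I) *
            Complex.exp (((Sq : ℝ) * θ) * Complex.I)) *
          ((∏ n ∈ p.support, xGauss n a ^ p n) *
            (starRingEnd ℂ) (∏ m ∈ q.support, xGauss m a ^ q m)) := by ring
      _ = _ := by rw [hc]; ring
  have hInt : ∫ a, F a ∂μ = -∫ a, F a ∂μ := by
    conv_lhs => rw [← hrot θ]
    rw [integral_map hmeas.aemeasurable]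
    · simp only [hkey]
      exact integral_neg F ▸ by rw [integral_neg]
    · rw [hrot θ]; exact hint.aestronglyMeasurable
  have h2 : ∫ a, F a ∂μ + ∫ a, F a ∂μ = 0 := by linear_combination hInt
  exact add_self_eq_zero.mp h2
end
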